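/- arXiv:2603.05382 — 6 statements merged into one kernel-verified Lean document; each statement's English description precedes it below -/
import Mathlib

section
/- Let μ be a locally finite Borel measure on ℝⁿ and 0 ≤ α < n. Then for every x ∈ ℝⁿ, the fractional maximal function satisfies M_α μ(x) ≤ c_{n,α} · Σ_{t ∈ {0,1/3}ⁿ} M_α^{𝒟_t} μ(x), where the sum ranges over the 2ⁿ shifted dyadic grids and c_{n,α} is a constant depending only on n and α. -/
open MeasureTheory
open scoped ENNReal

/-- The fractional maximal function `M_α μ(x) = sup_{r>0} r^α μ(B_r(x))/|B_r(x)|`. -/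
noncomputable def fracMax (n : ℕ) (α : ℝ) (μ : Measure (EuclideanSpace ℝ (Fin n)))
    (x : EuclideanSpace ℝ (Fin n)) : ℝ≥0∞ :=
  ⨆ (r : ℝ) (_ : 0 < r),
    ENNReal.ofReal (r ^ α) * μ (Metric.ball x r) / volume (Metric.ball x r)

/-- The shifted dyadic cube `2^k([0,1)ⁿ + m + (-1)^k t)` in ℝⁿ. -/
def shiftedDyadicCube (n : ℕ) (k : ℤ) (m : Fin n → ℤ) (t : Fin n → ℝ) :
    Set (EuclideanSpace ℝ (Fin n)) :=
  {y | ∀ i, (2 : ℝ) ^ k * ((m i : ℝ) + (-1 : ℝ) ^ k * t i) ≤ y i ∧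
        y i < (2 : ℝ) ^ k * ((m i : ℝ) + (-1 : ℝ) ^ k * t i + 1)}

/-- The dyadic fractional maximal operator associated with the shifted grid `𝒟_t`. -/
noncomputable def dyadicFracMax (n : ℕ) (α : ℝ) (t : Fin n → ℝ)
    (μ : Measure (EuclideanSpace ℝ (Fin n))) (x : EuclideanSpace ℝ (Fin n)) : ℝ≥0∞ :=
  ⨆ (k : ℤ) (m : Fin n → ℤ) (_ : x ∈ shiftedDyadicCube n k m t),
    ENNReal.ofReal (((2 : ℝ) ^ k) ^ α) * μ (shiftedDyadicCube n k m t)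
      / volume (shiftedDyadicCube n k m t)

/-- Each coordinate distance is dominated by the Euclidean distance. -/
lemma coord_dist_le {n : ℕ} (x y : EuclideanSpace ℝ (Fin n)) (i : Fin n) :
    dist (y i) (x i) ≤ dist y x := by
  rw [EuclideanSpace.dist_eq]
  have h : dist (y i) (x i) ^ 2 ≤ ∑ j, dist (y j) (x j) ^ 2 :=
    Finset.single_le_sum (f := fun j => dist (y j) (x j) ^ 2)
      (fun j _ => sq_nonneg _) (Finset.mem_univ i)
  calc dist (y i) (x i) = √(dist (y i) (x i) ^ 2) := by rw [Real.sqrt_sq dist_nonneg]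
    _ ≤ _ := Real.sqrt_le_sqrt h

/-- Volume of an axis-parallel half-open cube in Euclidean space. -/
lemma volume_halfOpenBox {n : ℕ} (L : Fin n → ℝ) (c : ℝ) (hc : 0 ≤ c) :
    volume {y : EuclideanSpace ℝ (Fin n) | ∀ i, L i ≤ y i ∧ y i < L i + c}
      = ENNReal.ofReal (c ^ n) := by
  have hset : {y : EuclideanSpace ℝ (Fin n) | ∀ i, L i ≤ y i ∧ y i < L i + c}
      = (MeasurableEquiv.toLp 2 (Fin n → ℝ)).symm ⁻¹'
        (Set.univ.pi fun i => Set.Ico (L i) (L i + c)) := by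
    ext y; simp [Set.mem_pi, Set.mem_Ico, MeasurableEquiv.toLp]; exact Iff.rfl
  rw [hset, (EuclideanSpace.volume_preserving_symm_measurableEquiv_toLp (Fin n)).measure_preimage
    (MeasurableSet.univ_pi fun i => measurableSet_Ico).nullMeasurableSet,
    volume_pi_pi]
  simp only [Real.volume_Ico, add_sub_cancel_left]
  rw [Finset.prod_const, Finset.card_univ, Fintype.card_fin, ← ENNReal.ofReal_pow hc]

/-- The fractional maximal function is pointwise controlled by the sum of the `2ⁿ`
shifted dyadic fractional maximal functions. -/
theorem fracMax_le_sum_dyadicFracMax (n : ℕ) (α : ℝ) (hα : 0 ≤ α) (hαn : α < n) :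
    ∃ c : ℝ≥0∞, 0 < c ∧ c ≠ ⊤ ∧
      ∀ (μ : Measure (EuclideanSpace ℝ (Fin n))) [IsLocallyFiniteMeasure μ]
        (x : EuclideanSpace ℝ (Fin n)),
        fracMax n α μ x ≤
          c * ∑ t : Fin n → Bool,
            dyadicFracMax n α (fun i => if t i then 1 / 3 else 0) μ x := by
  set ω : ℝ≥0∞ := volume (Metric.ball (0 : EuclideanSpace ℝ (Fin n)) 1) with hωdef
  have hω0 : ω ≠ 0 := (Metric.measure_ball_pos volume _ one_pos).ne'
  have hωt : ω ≠ ⊤ := measure_ball_lt_top.ne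
  set c : ℝ≥0∞ := ENNReal.ofReal ((12 : ℝ) ^ n) / ω with hcdef
  have h12 : (0:ℝ) < (12:ℝ) ^ n := by positivity
  refine ⟨c, ENNReal.div_pos (ENNReal.ofReal_pos.mpr h12).ne' hωt,
    (ENNReal.div_lt_top ENNReal.ofReal_ne_top hω0).ne, ?_⟩
  intro μ _ x
  rw [fracMax]
  refine iSup_le fun r => iSup_le fun hr => ?_
  -- choose the scale k
  set k : ℤ := Int.log 2 (6 * r) + 1 with hkdef
  have h6 : (0:ℝ) < 6 * r := by linarith
  have h1 : 6 * r < (2:ℝ) ^ k := by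
    exact_mod_cast Int.lt_zpow_succ_log_self (b := 2) (by norm_num) (6 * r)
  have h2 : (2:ℝ) ^ k ≤ 12 * r := by
    have hlow : ((2:ℕ):ℝ) ^ Int.log 2 (6 * r) ≤ 6 * r :=
      Int.zpow_log_le_self (by norm_num) h6
    have e : (2:ℝ) ^ k = 2 ^ Int.log 2 (6 * r) * 2 := zpow_add_one₀ two_ne_zero _
    rw [e]
    push_cast at hlow
    linarith
  set P : ℝ := (2:ℝ) ^ k with hPdef
  have hP : 0 < P := zpow_pos (by norm_num) k
  -- choose the grid and cube
  set q : Fin n → ℝ := fun i => (x i - r) / P with hqdef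
  set bt : Fin n → Bool := fun i => decide (2/3 < Int.fract (q i)) with hbtdef
  set tf : Fin n → ℝ := fun i => if bt i then 1 / 3 else 0 with htfdef
  set m : Fin n → ℤ := fun i =>
    if bt i then (if Even k then ⌊q i⌋ else ⌊q i⌋ + 1) else ⌊q i⌋ with hmdef
  have hkey : ∀ i, (m i : ℝ) + (-1:ℝ) ^ k * tf i ≤ q i ∧
      q i ≤ ((m i : ℝ) + (-1:ℝ) ^ k * tf i) + 2/3 := by
    intro i
    have hf0 : 0 ≤ Int.fract (q i) := Int.fract_nonneg _
    have hf1 : Int.fract (q i) < 1 := Int.fract_lt_one _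
    have hfl : (⌊q i⌋ : ℝ) + Int.fract (q i) = q i := Int.floor_add_fract _
    by_cases hb : 2/3 < Int.fract (q i)
    · have hbe : bt i = true := by simp [hbtdef, hb]
      rcases Int.even_or_odd k with he | ho
      · have : (m i : ℝ) + (-1:ℝ) ^ k * tf i = (⌊q i⌋ : ℝ) + 1/3 := by
          rw [hmdef, htfdef]
          simp [hbe, he, he.neg_one_zpow]
        rw [this]; constructor <;> linarith
      · have : (m i : ℝ) + (-1:ℝ) ^ k * tf i = (⌊q i⌋ : ℝ) + 2/3 := by
          rw [hmdef, htfdef]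
          simp [hbe, ho.neg_one_zpow, Int.not_even_iff_odd.mpr ho]
          ring
        rw [this]; constructor <;> linarith
    · have hbe : bt i = false := by simp [hbtdef, hb]
      have : (m i : ℝ) + (-1:ℝ) ^ k * tf i = (⌊q i⌋ : ℝ) := by
        rw [hmdef, htfdef]; simp [hbe]
      rw [this]
      push_neg at hb
      constructor <;> linarith
  -- the ball is contained in the cube
  have hsub : Metric.ball x r ⊆ shiftedDyadicCube n k m tf := by
    intro y hy
    have hd : dist y x < r := Metric.mem_ball.mp hy
    intro i
    have habs : |y i - x i| < r :=
      lt_of_le_of_lt (by rw [← Real.dist_eq]; exact coord_dist_le x y i) hd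
    obtain ⟨ha1, ha2⟩ := abs_lt.mp habs
    obtain ⟨hk1, hk2⟩ := hkey i
    have hPq : P * q i = x i - r := by
      rw [hqdef]; field_simp
    have hq1 : P * ((m i : ℝ) + (-1:ℝ) ^ k * tf i) ≤ P * q i :=
      mul_le_mul_of_nonneg_left hk1 hP.le
    have hq2 : P * q i ≤ P * (((m i : ℝ) + (-1:ℝ) ^ k * tf i) + 2/3) :=
      mul_le_mul_of_nonneg_left hk2 hP.le
    constructor
    · rw [← hPdef]; nlinarith
    · rw [← hPdef]; nlinarith
  have hx : x ∈ shiftedDyadicCube n k m tf := hsub (Metric.mem_ball_self hr)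
  -- volumes
  have hvolQ : volume (shiftedDyadicCube n k m tf) = ENNReal.ofReal (P ^ n) := by
    have : shiftedDyadicCube n k m tf =
        {y : EuclideanSpace ℝ (Fin n) |
          ∀ i, P * ((m i : ℝ) + (-1:ℝ) ^ k * tf i) ≤ y i ∧
            y i < P * ((m i : ℝ) + (-1:ℝ) ^ k * tf i) + P} := by
      ext y
      refine forall_congr' fun i => and_congr_right fun _ => ?_
      rw [← hPdef]
      constructor <;> intro h <;> nlinarith
    rw [this, volume_halfOpenBox _ _ hP.le]
  have hvolB : volume (Metric.ball x r) = ENNReal.ofReal (r ^ n) * ω := by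
    rw [Measure.addHaar_ball_of_pos volume x hr, finrank_euclideanSpace_fin, hωdef]
  have hvQ0 : volume (shiftedDyadicCube n k m tf) ≠ 0 := by
    rw [hvolQ]; exact (ENNReal.ofReal_pos.mpr (by positivity)).ne'
  have hvQt : volume (shiftedDyadicCube n k m tf) ≠ ⊤ := by
    rw [hvolQ]; exact ENNReal.ofReal_ne_top
  have hvB0 : volume (Metric.ball x r) ≠ 0 := (Metric.measure_ball_pos volume _ hr).ne'
  have hvBt : volume (Metric.ball x r) ≠ ⊤ := measure_ball_lt_top.ne
  -- volume comparison
  have hQB : volume (shiftedDyadicCube n k m tf) ≤ c * volume (Metric.ball x r) := by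
    rw [hvolQ, hvolB, hcdef]
    calc ENNReal.ofReal (P ^ n) ≤ ENNReal.ofReal ((12 * r) ^ n) :=
          ENNReal.ofReal_le_ofReal (pow_le_pow_left₀ hP.le h2 n)
      _ = ENNReal.ofReal ((12:ℝ) ^ n) * ENNReal.ofReal (r ^ n) := by
          rw [mul_pow, ENNReal.ofReal_mul (by positivity)]
      _ = ENNReal.ofReal ((12:ℝ) ^ n) / ω * (ENNReal.ofReal (r ^ n) * ω) := by
          rw [div_eq_mul_inv, mul_mul_mul_comm, mul_comm ω⁻¹,
            ENNReal.mul_inv_cancel hω0 hωt, mul_one]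
  have hinv : (volume (Metric.ball x r))⁻¹ ≤ c / volume (shiftedDyadicCube n k m tf) := by
    rw [ENNReal.le_div_iff_mul_le (Or.inl hvQ0) (Or.inl hvQt), mul_comm, ← div_eq_mul_inv,
      ENNReal.div_le_iff_le_mul (Or.inl hvB0) (Or.inl hvBt)]
    exact hQB
  have hrp : ENNReal.ofReal (r ^ α) ≤ ENNReal.ofReal (P ^ α) :=
    ENNReal.ofReal_le_ofReal (Real.rpow_le_rpow hr.le (by linarith) hα)
  have hμQ : μ (Metric.ball x r) ≤ μ (shiftedDyadicCube n k m tf) := measure_mono hsub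
  calc ENNReal.ofReal (r ^ α) * μ (Metric.ball x r) / volume (Metric.ball x r)
      = ENNReal.ofReal (r ^ α) * μ (Metric.ball x r) * (volume (Metric.ball x r))⁻¹ :=
        div_eq_mul_inv _ _
    _ ≤ ENNReal.ofReal (P ^ α) * μ (shiftedDyadicCube n k m tf)
        * (c / volume (shiftedDyadicCube n k m tf)) :=
        mul_le_mul' (mul_le_mul' hrp hμQ) hinv
    _ = c * (ENNReal.ofReal (P ^ α) * μ (shiftedDyadicCube n k m tf)
        / volume (shiftedDyadicCube n k m tf)) := by
        rw [div_eq_mul_inv, div_eq_mul_inv]; ring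
    _ ≤ c * dyadicFracMax n α tf μ x := by
        refine mul_le_mul_right ?_ c
        rw [dyadicFracMax]
        exact le_iSup_of_le k (le_iSup_of_le m (le_iSup_of_le hx le_rfl))
    _ ≤ c * ∑ t : Fin n → Bool,
          dyadicFracMax n α (fun i => if t i then 1 / 3 else 0) μ x := by
        refine mul_le_mul_right ?_ c
        exact Finset.single_le_sum
          (f := fun t : Fin n → Bool =>
            dyadicFracMax n α (fun i => if t i then 1 / 3 else 0) μ x)
          (fun t _ => zero_le) (Finset.mem_univ bt)
end

section
/- Let μ be a finite Borel measure on ℝⁿ and 0 ≤ α < n. Then there is a constant C = C(n,α) such that for every λ > 0, the Hausdorff content of the level set satisfies ℋ_∞^{n-α}({x ∈ ℝⁿ : M_α μ(x) > λ}) ≤ (C/λ) · μ(ℝⁿ). -/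
open MeasureTheory
open scoped ENNReal

/-- An axis-parallel cube with corner `c` and side length `l`. -/
def axisCube (n : ℕ) (c : Fin n → ℝ) (l : ℝ) : Set (EuclideanSpace ℝ (Fin n)) :=
  {y | ∀ i, c i ≤ y i ∧ y i ≤ c i + l}

/-- The Hausdorff content `ℋ_∞^s`, defined via countable coverings by cubes. -/
noncomputable def hausdorffContent (n : ℕ) (s : ℝ) (E : Set (EuclideanSpace ℝ (Fin n))) :
    ℝ≥0∞ :=
  ⨅ (c : ℕ → Fin n → ℝ) (l : ℕ → ℝ) (_ : ∀ k, 0 ≤ l k)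
    (_ : E ⊆ ⋃ k, axisCube n (c k) (l k)),
      ∑' k, ENNReal.ofReal (l k ^ s)

/-- Weak-type bound for the fractional maximal function with respect to
Hausdorff content. -/
theorem hausdorffContent_fracMax_levelSet (n : ℕ) (α : ℝ) (hα : 0 ≤ α) (hαn : α < n) :
    ∃ C : ℝ, 0 < C ∧
      ∀ (μ : Measure (EuclideanSpace ℝ (Fin n))) [IsFiniteMeasure μ] (lam : ℝ),
        0 < lam →
          hausdorffContent n ((n : ℝ) - α) {x | ENNReal.ofReal lam < fracMax n α μ x} ≤
            (ENNReal.ofReal (C / lam)) * μ Set.univ := by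
  classical
  have hn : 0 < n := by exact_mod_cast hα.trans_lt hαn
  haveI : Nontrivial (EuclideanSpace ℝ (Fin n)) := by
    apply Module.nontrivial_of_finrank_pos (R := ℝ)
    rw [finrank_euclideanSpace_fin]; exact hn
  have hs : (0:ℝ) < (n:ℝ) - α := sub_pos.2 hαn
  set s : ℝ := (n : ℝ) - α with hsdef
  set c : ℝ≥0∞ := volume (Metric.ball (0 : EuclideanSpace ℝ (Fin n)) 1) with hcdef
  have hc0 : c ≠ 0 := (Metric.measure_ball_pos volume _ one_pos).ne'
  have hcT : c ≠ ⊤ := measure_ball_lt_top.ne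
  set ct : ℝ := c.toReal with hctdef
  have hct : 0 < ct := ENNReal.toReal_pos hc0 hcT
  refine ⟨(8:ℝ) ^ s / ct, div_pos (Real.rpow_pos_of_pos (by norm_num) s) hct, ?_⟩
  intro μ _ lam hlam
  set E := {x | ENNReal.ofReal lam < fracMax n α μ x} with hEdef
  -- choose radii
  have hex : ∀ x ∈ E, ∃ r : ℝ, 0 < r ∧
      ENNReal.ofReal lam <
        ENNReal.ofReal (r ^ α) * μ (Metric.ball x r) / volume (Metric.ball x r) := by
    intro x hx
    have hx' : ENNReal.ofReal lam < fracMax n α μ x := hx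
    rw [fracMax, lt_iSup_iff] at hx'
    obtain ⟨r, hr⟩ := hx'
    rw [lt_iSup_iff] at hr
    obtain ⟨hr0, hrlt⟩ := hr
    exact ⟨r, hr0, hrlt⟩
  choose! r hr0 hrB using hex
  -- volume of balls
  have volball : ∀ (x : EuclideanSpace ℝ (Fin n)) (ρ : ℝ), 0 ≤ ρ →
      volume (Metric.ball x ρ) = ENNReal.ofReal (ρ ^ n) * c := by
    intro x ρ hρ
    rw [Measure.addHaar_ball volume x hρ, finrank_euclideanSpace_fin]
  -- key estimate
  have key : ∀ x ∈ E, ENNReal.ofReal (lam * ct * r x ^ s) < μ (Metric.ball x (r x)) := by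
    intro x hx
    have hρ := hr0 x hx
    have hB := hrB x hx
    have hvne : volume (Metric.ball x (r x)) ≠ 0 := (Metric.measure_ball_pos volume x hρ).ne'
    have hvT : volume (Metric.ball x (r x)) ≠ ⊤ := measure_ball_lt_top.ne
    rw [ENNReal.lt_div_iff_mul_lt (Or.inl hvne) (Or.inl hvT)] at hB
    have hsplit : (r x) ^ (n : ℕ) = r x ^ α * r x ^ s := by
      rw [← Real.rpow_natCast (r x) n, ← Real.rpow_add hρ]
      congr 1
      simp [hsdef]
    have hrw : ENNReal.ofReal lam * volume (Metric.ball x (r x))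
        = ENNReal.ofReal (r x ^ α) * ENNReal.ofReal (lam * ct * r x ^ s) := by
      rw [volball x (r x) hρ.le, hsplit, ← ENNReal.ofReal_toReal hcT, ← hctdef,
        ← ENNReal.ofReal_mul (by positivity), ← ENNReal.ofReal_mul (by positivity),
        ← ENNReal.ofReal_mul (by positivity)]
      congr 1
      ring
    rw [hrw] at hB
    have hαne : ENNReal.ofReal (r x ^ α) ≠ 0 := by
      simp [ENNReal.ofReal_eq_zero, not_le]
      exact Real.rpow_pos_of_pos hρ α
    exact (ENNReal.mul_lt_mul_iff_right hαne ENNReal.ofReal_ne_top).1 hB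
  -- uniform bound on the radii
  set M : ℝ := (μ Set.univ).toReal with hMdef
  set R : ℝ := (M / (lam * ct)) ^ (1/s) with hRdef
  have hrR : ∀ x ∈ E, r x ≤ R := by
    intro x hx
    have hρ := hr0 x hx
    have h1 : ENNReal.ofReal (lam * ct * r x ^ s) ≤ μ Set.univ :=
      (key x hx).le.trans (measure_mono (Set.subset_univ _))
    have h2 : lam * ct * r x ^ s ≤ M :=
      (ENNReal.ofReal_le_iff_le_toReal (measure_ne_top μ _)).1 h1
    have h3 : r x ^ s ≤ M / (lam * ct) := by
      rw [le_div_iff₀ (by positivity)]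
      nlinarith [h2]
    calc r x = (r x ^ s) ^ (1/s) := by
          rw [← Real.rpow_mul hρ.le, mul_one_div_cancel hs.ne', Real.rpow_one]
      _ ≤ R := Real.rpow_le_rpow (by positivity) h3 (by positivity)
  -- Vitali covering
  obtain ⟨u, huE, hdisj, hcov⟩ :=
    Vitali.exists_disjoint_subfamily_covering_enlargement_closedBall E (fun x => x) r R hrR
      4 (by norm_num)
  have hucount : u.Countable := by
    apply hdisj.countable_of_nonempty_interior
    intro b hb
    exact ⟨b, Metric.ball_subset_interior_closedBall (Metric.mem_ball_self (hr0 b (huE hb)))⟩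
  obtain ⟨g, hg⟩ := Set.countable_iff_exists_injective.1 hucount
  haveI : Countable ↥u := hucount.to_subtype
  have hchoose : ∀ (b : ↥u) (h : ∃ b' : ↥u, g b' = g b), h.choose = b := fun b h => hg h.choose_spec
  -- the covering cubes
  set L : ℕ → ℝ := fun k => if h : ∃ b : ↥u, g b = k then 8 * r h.choose else 0 with hLdef
  set cc : ℕ → Fin n → ℝ := fun k i =>
    if h : ∃ b : ↥u, g b = k then ((h.choose : ↥u) : EuclideanSpace ℝ (Fin n)) i - 4 * r h.choose
    else 0 with hccdef
  have hL : ∀ k, 0 ≤ L k := by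
    intro k
    simp only [hLdef]
    split_ifs with h
    · have hbE : (h.choose : EuclideanSpace ℝ (Fin n)) ∈ E := huE h.choose.2
      have := hr0 _ hbE
      positivity
    · exact le_refl 0
  -- coordinatewise distance bound
  have coord : ∀ (y z : EuclideanSpace ℝ (Fin n)) (i : Fin n), |y i - z i| ≤ dist y z := by
    intro y z i
    rw [EuclideanSpace.dist_eq]
    have h1 : |y i - z i| = Real.sqrt (dist (y i) (z i) ^ 2) := by
      rw [Real.sqrt_sq_eq_abs, Real.dist_eq, abs_abs]
    rw [h1]
    apply Real.sqrt_le_sqrt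
    exact Finset.single_le_sum (fun j _ => sq_nonneg (dist (y j) (z j))) (Finset.mem_univ i)
  -- the cubes cover E
  have hcover : E ⊆ ⋃ k, axisCube n (cc k) (L k) := by
    intro x hx
    obtain ⟨b, hbu, hsub⟩ := hcov x hx
    have hxb : x ∈ Metric.closedBall b (4 * r b) :=
      hsub (Metric.mem_closedBall_self (hr0 x hx).le)
    refine Set.mem_iUnion.2 ⟨g ⟨b, hbu⟩, ?_⟩
    intro i
    have h : ∃ b' : ↥u, g b' = g ⟨b, hbu⟩ := ⟨⟨b, hbu⟩, rfl⟩
    have hd : |x i - b i| ≤ 4 * r b := (coord x b i).trans (Metric.mem_closedBall.1 hxb)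
    have hd1 := abs_le.1 hd
    simp only [hccdef, hLdef, dif_pos h, hchoose _ h]
    constructor <;> [linarith [hd1.1]; linarith [hd1.2]]
  -- content is at most the sum over the covering
  have hcontent : hausdorffContent n s E ≤ ∑' k, ENNReal.ofReal (L k ^ s) := by
    rw [hausdorffContent]
    exact iInf_le_of_le cc (iInf_le_of_le L (iInf_le_of_le hL (iInf_le _ hcover)))
  -- rewrite the sum over the subfamily
  have hsum1 : ∑' k, ENNReal.ofReal (L k ^ s) = ∑' b : ↥u, ENNReal.ofReal ((8 * r b) ^ s) := by
    rw [← hg.tsum_eq (f := fun k => ENNReal.ofReal (L k ^ s))]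
    · congr 1
      funext b
      have h : ∃ b' : ↥u, g b' = g b := ⟨b, rfl⟩
      simp only [hLdef, dif_pos h, hchoose _ h]
    · intro k hk
      by_contra hk'
      have hnotex : ¬ ∃ b : ↥u, g b = k := by
        intro ⟨b, hb⟩; exact hk' ⟨b, hb⟩
      apply hk
      simp only [Function.mem_support, hLdef, dif_neg hnotex] at hk ⊢
      exact absurd (by rw [Real.zero_rpow hs.ne', ENNReal.ofReal_zero]) hk
  -- per-ball estimate
  have hterm : ∀ b : ↥u, ENNReal.ofReal ((8 * r (b : EuclideanSpace ℝ (Fin n))) ^ s)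
      ≤ ENNReal.ofReal ((8:ℝ)^s / (lam * ct)) * μ (Metric.closedBall b (r b)) := by
    intro b
    have hbE : (b : EuclideanSpace ℝ (Fin n)) ∈ E := huE b.2
    have hρ := hr0 _ hbE
    have hkey : ENNReal.ofReal (lam * ct * r b ^ s) ≤ μ (Metric.closedBall b (r b)) :=
      (key _ hbE).le.trans (measure_mono Metric.ball_subset_closedBall)
    calc ENNReal.ofReal ((8 * r (b : EuclideanSpace ℝ (Fin n))) ^ s)
        = ENNReal.ofReal ((8:ℝ)^s / (lam * ct)) * ENNReal.ofReal (lam * ct * r b ^ s) := by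
          rw [← ENNReal.ofReal_mul (by positivity)]
          congr 1
          rw [Real.mul_rpow (by norm_num) hρ.le]
          field_simp
      _ ≤ _ := mul_le_mul_right hkey _
  -- sum of measures of disjoint balls
  have hdisj' : Pairwise (Function.onFun Disjoint
      fun b : ↥u => Metric.closedBall (b : EuclideanSpace ℝ (Fin n)) (r b)) :=
    fun b b' hne => hdisj b.2 b'.2 (Subtype.coe_injective.ne hne)
  have hsum2 : ∑' b : ↥u, μ (Metric.closedBall (b : EuclideanSpace ℝ (Fin n)) (r b))
      ≤ μ Set.univ := by
    rw [← measure_iUnion hdisj' (fun b => measurableSet_closedBall)]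
    exact measure_mono (Set.subset_univ _)
  -- put it all together
  calc hausdorffContent n s E ≤ ∑' k, ENNReal.ofReal (L k ^ s) := hcontent
    _ = ∑' b : ↥u, ENNReal.ofReal ((8 * r (b : EuclideanSpace ℝ (Fin n))) ^ s) := hsum1
    _ ≤ ∑' b : ↥u, ENNReal.ofReal ((8:ℝ)^s / (lam * ct))
          * μ (Metric.closedBall (b : EuclideanSpace ℝ (Fin n)) (r b)) :=
        ENNReal.tsum_le_tsum hterm
    _ = ENNReal.ofReal ((8:ℝ)^s / (lam * ct))
          * ∑' b : ↥u, μ (Metric.closedBall (b : EuclideanSpace ℝ (Fin n)) (r b)) :=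
        ENNReal.tsum_mul_left
    _ ≤ ENNReal.ofReal ((8:ℝ)^s / (lam * ct)) * μ Set.univ := mul_le_mul_right hsum2 _
    _ = ENNReal.ofReal ((8:ℝ)^s / ct / lam) * μ Set.univ := by
        congr 2
        rw [div_div]
        ring_nf
end

section
/- Let μ be a finite Borel measure on ℝⁿ and 0 ≤ α < n. Then the set {x ∈ ℝⁿ : M_α μ(x) = ∞} has (n-α)-dimensional Hausdorff measure zero; in particular M_α μ(x) < ∞ for ℋ^{n-α}-almost every x ∈ ℝⁿ. -/
open MeasureTheory
open scoped ENNReal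

/-- Key step: at a point where the fractional maximal function is infinite, there are balls
with `μ (closedBall x r) > K * c * r ^ (n - α)` for arbitrary `K`. -/
lemma fracMax_key (n : ℕ) (α : ℝ) (hα : 0 ≤ α) (hαn : α < n)
    (μ : Measure (EuclideanSpace ℝ (Fin n))) {x : EuclideanSpace ℝ (Fin n)}
    (hx : fracMax n α μ x = ⊤) (K : ℝ≥0∞) (hK : K ≠ ⊤) :
    ∃ r : ℝ, 0 < r ∧
      K * volume (Metric.ball (0 : EuclideanSpace ℝ (Fin n)) 1) *
        ENNReal.ofReal (r ^ ((n : ℝ) - α)) < μ (Metric.closedBall x r) := by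
  have hn : 0 < n := by
    have : (0 : ℝ) < n := hα.trans_lt hαn
    exact_mod_cast this
  haveI : Nontrivial (EuclideanSpace ℝ (Fin n)) :=
    Module.nontrivial_of_finrank_pos (R := ℝ) (by rw [finrank_euclideanSpace_fin]; exact hn)
  have hK' : K < fracMax n α μ x := by rw [hx]; exact hK.lt_top
  rw [fracMax, lt_iSup_iff] at hK'
  obtain ⟨r, hr⟩ := hK'
  have hr0 : 0 < r := by
    by_contra h
    rw [iSup_neg h] at hr
    exact (not_lt_bot hr)
  rw [iSup_pos hr0] at hr
  refine ⟨r, hr0, ?_⟩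
  set c := volume (Metric.ball (0 : EuclideanSpace ℝ (Fin n)) 1) with hc
  have hV : volume (Metric.ball x r) = ENNReal.ofReal (r ^ n) * c := by
    rw [Measure.addHaar_ball volume x hr0.le, finrank_euclideanSpace_fin]
  have hV0 : volume (Metric.ball x r) ≠ 0 := (Metric.measure_ball_pos volume x hr0).ne'
  have hVt : volume (Metric.ball x r) ≠ ⊤ := measure_ball_lt_top.ne
  have h1 : K * volume (Metric.ball x r) <
      ENNReal.ofReal (r ^ α) * μ (Metric.ball x r) :=
    (ENNReal.lt_div_iff_mul_lt (Or.inl hV0) (Or.inl hVt)).1 hr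
  have hsplit : K * volume (Metric.ball x r) =
      ENNReal.ofReal (r ^ α) * (K * c * ENNReal.ofReal (r ^ ((n : ℝ) - α))) := by
    rw [hV]
    have : (r : ℝ) ^ n = r ^ α * r ^ ((n : ℝ) - α) := by
      rw [← Real.rpow_natCast r n, ← Real.rpow_add hr0]
      ring_nf
    rw [this, ENNReal.ofReal_mul (Real.rpow_nonneg hr0.le α)]
    ring
  rw [hsplit] at h1
  have hα0 : ENNReal.ofReal (r ^ α) ≠ 0 := by
    simp [ENNReal.ofReal_eq_zero, not_le, Real.rpow_pos_of_pos hr0]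
  have h2 : K * c * ENNReal.ofReal (r ^ ((n : ℝ) - α)) < μ (Metric.ball x r) :=
    (ENNReal.mul_lt_mul_iff_right hα0 ENNReal.ofReal_ne_top).1 h1
  exact h2.trans_le (measure_mono Metric.ball_subset_closedBall)

/-- For a finite Borel measure `μ`, the set where `M_α μ = ∞` has
`(n-α)`-dimensional Hausdorff measure zero. -/
theorem hausdorffMeasure_fracMax_eq_top (n : ℕ) (α : ℝ) (hα : 0 ≤ α) (hαn : α < n)
    (μ : Measure (EuclideanSpace ℝ (Fin n))) [IsFiniteMeasure μ] :
    μH[(n : ℝ) - α] {x : EuclideanSpace ℝ (Fin n) | fracMax n α μ x = ⊤} = 0 := by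
  set X := EuclideanSpace ℝ (Fin n)
  set d : ℝ := (n : ℝ) - α with hd_def
  have hd : 0 < d := sub_pos.2 hαn
  set E : Set X := {x : X | fracMax n α μ x = ⊤} with hE_def
  set c : ℝ≥0∞ := volume (Metric.ball (0 : X) 1) with hc_def
  have hn : 0 < n := by
    have : (0 : ℝ) < n := hα.trans_lt hαn
    exact_mod_cast this
  haveI : Nontrivial X :=
    Module.nontrivial_of_finrank_pos (R := ℝ) (by rw [finrank_euclideanSpace_fin]; exact hn)
  have hc0 : c ≠ 0 := (Metric.measure_ball_pos volume _ one_pos).ne'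
  have hcT : c ≠ ⊤ := measure_ball_lt_top.ne
  set q : ℕ → ℝ≥0∞ := fun m => μ Set.univ / ((m : ℝ≥0∞) * c) with hq_def
  set ρ : ℕ → ℝ := fun m => (q m).toReal ^ d⁻¹ with hρ_def
  have hρ0 : ∀ m, 0 ≤ ρ m := fun m => Real.rpow_nonneg ENNReal.toReal_nonneg _
  -- choose radii
  have hrad : ∀ (m : ℕ) (x : X), ∃ r : ℝ, 0 ≤ r ∧ r ≤ ρ m ∧
      (0 < m → x ∈ E → 0 < r ∧
        (m : ℝ≥0∞) * c * ENNReal.ofReal (r ^ d) < μ (Metric.closedBall x r)) := by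
    intro m x
    by_cases h : 0 < m ∧ x ∈ E
    · obtain ⟨r, hr, hlt⟩ :=
        fracMax_key n α hα hαn μ h.2 (m : ℝ≥0∞) (ENNReal.natCast_ne_top m)
      have hmc0 : (m : ℝ≥0∞) * c ≠ 0 :=
        mul_ne_zero (Nat.cast_ne_zero.2 h.1.ne') hc0
      have hmcT : (m : ℝ≥0∞) * c ≠ ⊤ := ENNReal.mul_ne_top (ENNReal.natCast_ne_top m) hcT
      have h3 : ENNReal.ofReal (r ^ d) * ((m : ℝ≥0∞) * c) < μ Set.univ := by
        calc ENNReal.ofReal (r ^ d) * ((m : ℝ≥0∞) * c)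
            = (m : ℝ≥0∞) * c * ENNReal.ofReal (r ^ d) := by ring
          _ < μ (Metric.closedBall x r) := hlt
          _ ≤ μ Set.univ := measure_mono (Set.subset_univ _)
      have h4 : ENNReal.ofReal (r ^ d) < q m :=
        (ENNReal.lt_div_iff_mul_lt (Or.inl hmc0) (Or.inl hmcT)).2 h3
      have hqT : q m ≠ ⊤ := (ENNReal.div_lt_top (measure_ne_top μ _) hmc0).ne
      have h5 : r ^ d < (q m).toReal :=
        (ENNReal.ofReal_lt_iff_lt_toReal (Real.rpow_nonneg hr.le d) hqT).1 h4
      refine ⟨r, hr.le, ?_, fun _ _ => ⟨hr, hlt⟩⟩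
      calc r = (r ^ d) ^ d⁻¹ := (Real.rpow_rpow_inv hr.le hd.ne').symm
        _ ≤ (q m).toReal ^ d⁻¹ :=
            Real.rpow_le_rpow (Real.rpow_nonneg hr.le d) h5.le (inv_nonneg.2 hd.le)
        _ = ρ m := rfl
    · exact ⟨0, le_refl 0, hρ0 m, fun hm hx => absurd ⟨hm, hx⟩ h⟩
  choose rad hrad0 hradρ hradE using hrad
  -- Vitali covering
  have hu : ∀ m : ℕ, ∃ u : Set X, u ⊆ E ∧ u.Countable ∧
      (u.PairwiseDisjoint fun b => Metric.closedBall b (rad m b)) ∧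
      (0 < m → ∀ a ∈ E, ∃ b ∈ u,
        Metric.closedBall a (rad m a) ⊆ Metric.closedBall b (4 * rad m b)) := by
    intro m
    rcases Nat.eq_zero_or_pos m with rfl | hm
    · exact ⟨∅, Set.empty_subset _, Set.countable_empty, Set.pairwiseDisjoint_empty,
        fun h => absurd h (lt_irrefl 0)⟩
    · obtain ⟨u, hu1, hu2, hu3⟩ :=
        Vitali.exists_disjoint_subfamily_covering_enlargement_closedBall E
          (id : X → X) (rad m) (ρ m) (fun a _ => hradρ m a) 4 (by norm_num)
      have hcnt : u.Countable := by
        apply hu2.countable_of_nonempty_interior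
        intro b hb
        have hbpos : 0 < rad m b := (hradE m b hm (hu1 hb)).1
        exact (Metric.nonempty_ball.2 hbpos).mono Metric.ball_subset_interior_closedBall
      exact ⟨u, hu1, hcnt, hu2, fun _ a ha => hu3 a ha⟩
  choose u huE huC huD huCov using hu
  haveI : ∀ m : ℕ, Countable (u m) := fun m => (huC m).to_subtype
  set t : ∀ m : ℕ, (u m) → Set X :=
    fun m b => Metric.closedBall (b : X) (4 * rad m (b : X)) with ht_def
  set rr : ℕ → ℝ≥0∞ := fun m => ENNReal.ofReal (8 * ρ m) with hrr_def
  -- tendsto facts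
  have tendsto_q : Filter.Tendsto q Filter.atTop (nhds 0) := by
    have heq : ∀ m : ℕ, q m = μ Set.univ * c⁻¹ * ((m : ℝ≥0∞))⁻¹ := by
      intro m
      rw [hq_def]
      simp only [div_eq_mul_inv, ENNReal.mul_inv (Or.inr hcT) (Or.inr hc0)]
      ring
    rw [show q = fun m : ℕ => μ Set.univ * c⁻¹ * ((m : ℝ≥0∞))⁻¹ from funext heq]
    have := ENNReal.Tendsto.const_mul (a := μ Set.univ * c⁻¹)
      ENNReal.tendsto_inv_nat_nhds_zero
      (Or.inr (ENNReal.mul_ne_top (measure_ne_top μ _) (ENNReal.inv_ne_top.2 hc0)))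
    simpa using this
  have tendsto_qre : Filter.Tendsto (fun m => (q m).toReal) Filter.atTop (nhds 0) := by
    have := (ENNReal.tendsto_toReal (a := 0) (by simp)).comp tendsto_q
    simpa [Function.comp_def] using this
  have tendsto_ρ : Filter.Tendsto ρ Filter.atTop (nhds 0) := by
    have h := tendsto_qre.rpow_const (p := d⁻¹) (Or.inr (inv_nonneg.2 hd.le))
    rw [Real.zero_rpow (inv_ne_zero hd.ne')] at h
    exact h
  have tendsto_rr : Filter.Tendsto rr Filter.atTop (nhds 0) := by
    have h8 : Filter.Tendsto (fun m => 8 * ρ m) Filter.atTop (nhds 0) := by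
      simpa using tendsto_ρ.const_mul (8 : ℝ)
    have := (ENNReal.continuous_ofReal.tendsto 0).comp h8
    simpa [Function.comp_def, hrr_def] using this
  -- diameter bounds
  have hdiam : ∀ (m : ℕ) (i : u m), EMetric.diam (t m i) ≤ rr m := by
    intro m i
    have h40 : (0 : ℝ) ≤ 4 * rad m (i : X) := by
      have := hrad0 m (i : X); linarith
    have h1 : EMetric.diam (t m i) ≤ 2 * ENNReal.ofReal (4 * rad m (i : X)) := by
      rw [ht_def]
      simp only
      rw [← Metric.emetric_closedBall h40]
      exact EMetric.diam_closedBall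
    have h2 : (2 : ℝ≥0∞) * ENNReal.ofReal (4 * rad m (i : X)) =
        ENNReal.ofReal (8 * rad m (i : X)) := by
      rw [show (2 : ℝ≥0∞) = ENNReal.ofReal 2 by simp,
        ← ENNReal.ofReal_mul (by norm_num)]
      ring_nf
    calc EMetric.diam (t m i) ≤ ENNReal.ofReal (8 * rad m (i : X)) := h1.trans_eq h2
      _ ≤ rr m := ENNReal.ofReal_le_ofReal (by have := hradρ m (i : X); linarith)
  -- covering
  have hcover : ∀ᶠ m in Filter.atTop, E ⊆ ⋃ i, t m i := by
    filter_upwards [Filter.eventually_ge_atTop 1] with m hm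
    intro x hx
    obtain ⟨b, hbu, hsub⟩ := huCov m hm x hx
    have hx0 : 0 < rad m x := (hradE m x hm hx).1
    exact Set.mem_iUnion.2 ⟨⟨b, hbu⟩, hsub (Metric.mem_closedBall_self hx0.le)⟩
  -- main estimate
  have hmain : μH[d] E ≤
      Filter.liminf (fun m => ∑' i : u m, EMetric.diam (t m i) ^ d) Filter.atTop :=
    Measure.hausdorffMeasure_le_liminf_tsum d E rr tendsto_rr t
      (Filter.Eventually.of_forall hdiam) hcover
  -- bound the sums
  set g : ℕ → ℝ≥0∞ := fun m =>
    ENNReal.ofReal (8 ^ d) * (μ Set.univ / ((m : ℝ≥0∞) * c)) with hg_def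
  have hsum : ∀ᶠ m in Filter.atTop,
      (∑' i : u m, EMetric.diam (t m i) ^ d) ≤ g m := by
    filter_upwards [Filter.eventually_ge_atTop 1] with m hm
    have hmc0 : (m : ℝ≥0∞) * c ≠ 0 := by
      simp [hc0, (Nat.lt_of_lt_of_le Nat.zero_lt_one hm).ne']
    have hmcT : (m : ℝ≥0∞) * c ≠ ⊤ := ENNReal.mul_ne_top (ENNReal.natCast_ne_top m) hcT
    have step1 : ∀ i : u m, EMetric.diam (t m i) ^ d ≤
        ENNReal.ofReal (8 ^ d) * (μ (Metric.closedBall (i : X) (rad m (i : X))) /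
          ((m : ℝ≥0∞) * c)) := by
      intro i
      have hi : (i : X) ∈ E := huE m i.2
      have hr0 : 0 ≤ rad m (i : X) := hrad0 m (i : X)
      have hlt := (hradE m (i : X) hm hi).2
      have hb1 : EMetric.diam (t m i) ^ d ≤ ENNReal.ofReal (8 * rad m (i : X)) ^ d := by
        apply ENNReal.rpow_le_rpow _ hd.le
        have h40 : (0 : ℝ) ≤ 4 * rad m (i : X) := by linarith
        have h1 : EMetric.diam (t m i) ≤ 2 * ENNReal.ofReal (4 * rad m (i : X)) := by
          rw [ht_def]; simp only
          rw [← Metric.emetric_closedBall h40]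
          exact EMetric.diam_closedBall
        have h2 : (2 : ℝ≥0∞) * ENNReal.ofReal (4 * rad m (i : X)) =
            ENNReal.ofReal (8 * rad m (i : X)) := by
          rw [show (2 : ℝ≥0∞) = ENNReal.ofReal 2 by simp,
            ← ENNReal.ofReal_mul (by norm_num)]
          ring_nf
        exact h1.trans_eq h2
      have hb2 : ENNReal.ofReal (8 * rad m (i : X)) ^ d =
          ENNReal.ofReal (8 ^ d) * ENNReal.ofReal (rad m (i : X) ^ d) := by
        rw [ENNReal.ofReal_rpow_of_nonneg (by linarith) hd.le,
          Real.mul_rpow (by norm_num) hr0,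
          ENNReal.ofReal_mul (Real.rpow_nonneg (by norm_num) d)]
      have hb3 : ENNReal.ofReal (rad m (i : X) ^ d) ≤
          μ (Metric.closedBall (i : X) (rad m (i : X))) / ((m : ℝ≥0∞) * c) := by
        rw [ENNReal.le_div_iff_mul_le (Or.inl hmc0) (Or.inl hmcT)]
        calc ENNReal.ofReal (rad m (i : X) ^ d) * ((m : ℝ≥0∞) * c)
            = (m : ℝ≥0∞) * c * ENNReal.ofReal (rad m (i : X) ^ d) := by ring
          _ ≤ μ (Metric.closedBall (i : X) (rad m (i : X))) := hlt.le
      calc EMetric.diam (t m i) ^ d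
          ≤ ENNReal.ofReal (8 ^ d) * ENNReal.ofReal (rad m (i : X) ^ d) := hb1.trans_eq hb2
        _ ≤ ENNReal.ofReal (8 ^ d) *
            (μ (Metric.closedBall (i : X) (rad m (i : X))) / ((m : ℝ≥0∞) * c)) :=
            mul_le_mul_right hb3 _
    calc (∑' i : u m, EMetric.diam (t m i) ^ d)
        ≤ ∑' i : u m, ENNReal.ofReal (8 ^ d) *
            (μ (Metric.closedBall (i : X) (rad m (i : X))) / ((m : ℝ≥0∞) * c)) :=
          ENNReal.tsum_le_tsum step1
      _ = ENNReal.ofReal (8 ^ d) *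
          ((∑' i : u m, μ (Metric.closedBall (i : X) (rad m (i : X)))) / ((m : ℝ≥0∞) * c)) := by
          rw [ENNReal.tsum_mul_left]
          congr 1
          simp only [div_eq_mul_inv, ENNReal.tsum_mul_right]
      _ ≤ g m := by
          rw [hg_def]
          apply mul_le_mul_right
          apply ENNReal.div_le_div_right
          have heq : (∑' i : u m, μ (Metric.closedBall (i : X) (rad m (i : X)))) =
              μ (⋃ b ∈ u m, Metric.closedBall b (rad m b)) :=
            (measure_biUnion (huC m) (huD m) fun b _ => measurableSet_closedBall).symm
          rw [heq]
          exact measure_mono (Set.subset_univ _)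
  have tendsto_g : Filter.Tendsto g Filter.atTop (nhds 0) := by
    have := ENNReal.Tendsto.const_mul (a := ENNReal.ofReal (8 ^ d)) tendsto_q
      (Or.inr ENNReal.ofReal_ne_top)
    simpa [hg_def] using this
  have hliminf : Filter.liminf (fun m => ∑' i : u m, EMetric.diam (t m i) ^ d)
      Filter.atTop ≤ 0 := by
    calc Filter.liminf (fun m => ∑' i : u m, EMetric.diam (t m i) ^ d) Filter.atTop
        ≤ Filter.liminf g Filter.atTop := Filter.liminf_le_liminf hsum
      _ = 0 := tendsto_g.liminf_eq
  exact le_antisymm (hmain.trans hliminf) zero_le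
end

section
/- Let μ be a locally finite Borel measure on ℝⁿ and 0 ≤ α < n. Then the following are equivalent: (1) there exists x₀ ∈ ℝⁿ with M_α μ(x₀) < ∞; (2) the set {x ∈ ℝⁿ : M_α μ(x) = ∞} has ℋ^{n-α}-measure zero. -/
open MeasureTheory Metric Set
open scoped ENNReal Topology

private lemma aux_zero {a c : ℝ≥0∞} (hc : c ≠ ∞) (h : ∀ M : ℕ, ((M : ℝ≥0∞) + 1) * a ≤ c) :
    a = 0 := by
  by_contra ha
  obtain ⟨M, hM⟩ := ENNReal.exists_nat_gt (show c / a ≠ ∞ from (ENNReal.div_lt_top hc ha).ne)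
  have h2 : c < ((M : ℝ≥0∞) + 1) * a := by
    have h1 : c < (M : ℝ≥0∞) * a := by
      rw [← ENNReal.div_lt_iff (Or.inl ha) (Or.inr hc)]
      exact hM
    exact h1.trans_le (by gcongr; exact le_self_add)
  exact absurd (h M) h2.not_ge

private lemma diam_closedBall_le' {X : Type*} [PseudoMetricSpace X] (x : X) (r : ℝ) :
    EMetric.diam (closedBall x r) ≤ ENNReal.ofReal (2 * r) := by
  refine EMetric.diam_le fun p hp q hq => ?_
  rw [edist_dist]
  refine ENNReal.ofReal_le_ofReal ?_
  calc dist p q ≤ dist p x + dist q x := dist_triangle_right _ _ _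
    _ ≤ r + r := add_le_add hp hq
    _ = 2 * r := by ring

/-- Key density lemma: the set of points where small balls have arbitrarily large `r^s`-normalized
measure is `μH[s]`-null. -/
private lemma key_null (n : ℕ) (s : ℝ) (hs : 0 < s) (μ : Measure (EuclideanSpace ℝ (Fin n)))
    [IsLocallyFiniteMeasure μ] :
    μH[s] {x : EuclideanSpace ℝ (Fin n) | ∀ M : ℕ, ∀ δ : ℝ, 0 < δ →
      ∃ r : ℝ, 0 < r ∧ r < δ ∧ ((M : ℝ≥0∞) + 1) * ENNReal.ofReal (r ^ s) ≤ μ (ball x r)} = 0 := by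
  set X := EuclideanSpace ℝ (Fin n)
  set T := {x : X | ∀ M : ℕ, ∀ δ : ℝ, 0 < δ →
      ∃ r : ℝ, 0 < r ∧ r < δ ∧ ((M : ℝ≥0∞) + 1) * ENNReal.ofReal (r ^ s) ≤ μ (ball x r)} with hT
  have hcover : T ⊆ ⋃ k : ℕ, T ∩ closedBall (0 : X) k := by
    intro x hx
    obtain ⟨k, hk⟩ := exists_nat_ge (dist x (0 : X))
    exact mem_iUnion.2 ⟨k, hx, by simpa [mem_closedBall] using hk⟩
  refine measure_mono_null hcover (measure_iUnion_null fun k => ?_)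
  set c : ℝ≥0∞ := ENNReal.ofReal (10 ^ s) * μ (closedBall (0 : X) (k + 1)) with hc
  have hcfin : c ≠ ∞ :=
    ENNReal.mul_ne_top ENNReal.ofReal_ne_top (isCompact_closedBall _ _).measure_lt_top.ne
  refine aux_zero hcfin fun M => ?_
  have hM0 : ((M : ℝ≥0∞) + 1) ≠ 0 := by simp
  have hMt : ((M : ℝ≥0∞) + 1) ≠ ∞ := by simp
  rw [mul_comm, ← ENNReal.le_div_iff_mul_le (Or.inl hM0) (Or.inl hMt)]
  -- for each b : ℕ, construct a Vitali family at scale (b+1)⁻¹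
  have pack : ∀ b : ℕ, ∃ (u : Set X) (ρ : X → ℝ), u.Countable ∧
      (∀ x ∈ u, 0 < ρ x ∧ ρ x < ((b : ℝ) + 1)⁻¹ ∧
        ((M : ℝ≥0∞) + 1) * ENNReal.ofReal (ρ x ^ s) ≤ μ (ball x (ρ x))) ∧
      u.PairwiseDisjoint (fun x => closedBall x (ρ x)) ∧
      u ⊆ T ∩ closedBall (0 : X) k ∧
      T ∩ closedBall (0 : X) k ⊆ ⋃ x ∈ u, closedBall x (4 * ρ x) := by
    intro b
    set δ : ℝ := ((b : ℝ) + 1)⁻¹ with hδdef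
    have hδ : 0 < δ := by positivity
    have hsel : ∀ x : X, ∃ r : ℝ, x ∈ T →
        0 < r ∧ r < δ ∧ ((M : ℝ≥0∞) + 1) * ENNReal.ofReal (r ^ s) ≤ μ (ball x r) := by
      intro x
      by_cases hx : x ∈ T
      · obtain ⟨r, h1, h2, h3⟩ := hx M δ hδ
        exact ⟨r, fun _ => ⟨h1, h2, h3⟩⟩
      · exact ⟨1, fun h => absurd h hx⟩
    choose ρ hρ using hsel
    obtain ⟨u, hut, hdisj, hcov⟩ :=
      Vitali.exists_disjoint_subfamily_covering_enlargement_closedBall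
        (T ∩ closedBall (0 : X) k) id ρ δ
        (fun a ha => (hρ a ha.1).2.1.le) 4 (by norm_num)
    have hball : ∀ x ∈ u, 0 < ρ x ∧ ρ x < δ ∧
        ((M : ℝ≥0∞) + 1) * ENNReal.ofReal (ρ x ^ s) ≤ μ (ball x (ρ x)) :=
      fun x hx => hρ x (hut hx).1
    refine ⟨u, ρ, ?_, hball, hdisj, hut, ?_⟩
    · have hdisj' : u.PairwiseDisjoint (fun x => ball x (ρ x)) :=
        hdisj.mono_on fun x _ => ball_subset_closedBall
      exact hdisj'.countable_of_isOpen (fun x _ => isOpen_ball)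
        (fun x hx => nonempty_ball.2 (hball x hx).1)
    · intro a ha
      obtain ⟨y, hy, hsub⟩ := hcov a ha
      exact mem_iUnion₂.2 ⟨y, hy, hsub (mem_closedBall_self (hρ a ha.1).1.le)⟩
  choose u ρ hcnt hball hdisj hsub hcov using pack
  haveI : ∀ b : ℕ, Countable ↥(u b) := fun b => (hcnt b).to_subtype
  have hr0 : Filter.Tendsto (fun b : ℕ => ENNReal.ofReal (10 * ((b : ℝ) + 1)⁻¹))
      Filter.atTop (𝓝 0) := by
    have h1 : Filter.Tendsto (fun b : ℕ => 10 * ((b : ℝ) + 1)⁻¹) Filter.atTop (𝓝 0) := by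
      simpa using (tendsto_one_div_add_atTop_nhds_zero_nat (𝕜 := ℝ)).const_mul 10
    simpa using ENNReal.tendsto_ofReal h1
  refine le_trans (Measure.hausdorffMeasure_le_liminf_tsum s (T ∩ closedBall (0 : X) k)
      (fun b : ℕ => ENNReal.ofReal (10 * ((b : ℝ) + 1)⁻¹)) hr0
      (fun (b : ℕ) (i : u b) => closedBall (i : X) (4 * ρ b i)) ?_ ?_) ?_
  · refine Filter.Eventually.of_forall fun b => fun i => ?_
    refine (diam_closedBall_le' _ _).trans (ENNReal.ofReal_le_ofReal ?_)
    have h1 := (hball b i i.2).1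
    have h2 := (hball b i i.2).2.1
    nlinarith
  · refine Filter.Eventually.of_forall fun b => fun x hx => ?_
    obtain ⟨y, hy, h⟩ := mem_iUnion₂.1 (hcov b hx)
    exact mem_iUnion.2 ⟨⟨y, hy⟩, h⟩
  · have hbound : ∀ b : ℕ,
        (∑' i : u b, EMetric.diam (closedBall (i : X) (4 * ρ b i)) ^ s) ≤
          c / ((M : ℝ≥0∞) + 1) := by
      intro b
      have hterm : ∀ i : u b,
          EMetric.diam (closedBall (i : X) (4 * ρ b i)) ^ s ≤
            ENNReal.ofReal (10 ^ s) * (μ (ball (i : X) (ρ b i)) / ((M : ℝ≥0∞) + 1)) := by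
        intro i
        obtain ⟨h1, h2, h3⟩ := hball b i i.2
        have step1 : EMetric.diam (closedBall (i : X) (4 * ρ b i)) ^ s ≤
            ENNReal.ofReal ((10 * ρ b i) ^ s) := by
          calc EMetric.diam (closedBall (i : X) (4 * ρ b i)) ^ s
              ≤ ENNReal.ofReal (2 * (4 * ρ b i)) ^ s :=
                ENNReal.rpow_le_rpow (diam_closedBall_le' _ _) hs.le
            _ = ENNReal.ofReal ((2 * (4 * ρ b i)) ^ s) :=
                ENNReal.ofReal_rpow_of_pos (by linarith)
            _ ≤ ENNReal.ofReal ((10 * ρ b i) ^ s) := by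
                refine ENNReal.ofReal_le_ofReal ?_
                exact Real.rpow_le_rpow (by linarith) (by linarith) hs.le
        have step2 : ENNReal.ofReal ((10 * ρ b i) ^ s) =
            ENNReal.ofReal (10 ^ s) * ENNReal.ofReal (ρ b i ^ s) := by
          rw [Real.mul_rpow (by norm_num) h1.le, ENNReal.ofReal_mul (by positivity)]
        have step3 : ENNReal.ofReal (ρ b i ^ s) ≤ μ (ball (i : X) (ρ b i)) / ((M : ℝ≥0∞) + 1) := by
          rw [ENNReal.le_div_iff_mul_le (Or.inl hM0) (Or.inl hMt), mul_comm]
          exact h3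
        calc EMetric.diam (closedBall (i : X) (4 * ρ b i)) ^ s
            ≤ ENNReal.ofReal ((10 * ρ b i) ^ s) := step1
          _ = ENNReal.ofReal (10 ^ s) * ENNReal.ofReal (ρ b i ^ s) := step2
          _ ≤ ENNReal.ofReal (10 ^ s) * (μ (ball (i : X) (ρ b i)) / ((M : ℝ≥0∞) + 1)) := by
              gcongr
      calc (∑' i : u b, EMetric.diam (closedBall (i : X) (4 * ρ b i)) ^ s)
          ≤ ∑' i : u b, ENNReal.ofReal (10 ^ s) *
              (μ (ball (i : X) (ρ b i)) / ((M : ℝ≥0∞) + 1)) := ENNReal.tsum_le_tsum hterm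
        _ = ENNReal.ofReal (10 ^ s) * ((∑' i : u b, μ (ball (i : X) (ρ b i))) / ((M : ℝ≥0∞) + 1)) := by
            simp only [div_eq_mul_inv, ENNReal.tsum_mul_left, ENNReal.tsum_mul_right]
        _ = ENNReal.ofReal (10 ^ s) *
              (μ (⋃ x ∈ u b, ball x (ρ b x)) / ((M : ℝ≥0∞) + 1)) := by
            rw [measure_biUnion (hcnt b)
              ((hdisj b).mono_on fun x _ => ball_subset_closedBall)
              (fun x _ => measurableSet_ball)]
        _ ≤ c / ((M : ℝ≥0∞) + 1) := by
            rw [hc, mul_div_assoc]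
            gcongr
            refine iUnion₂_subset fun x hx => fun y hy => ?_
            have hx' := hsub b hx
            have hρδ := (hball b x hx).2.1
            have hδ1 : ((b : ℝ) + 1)⁻¹ ≤ 1 := by
              rw [inv_le_one_iff₀]; right; linarith [Nat.cast_nonneg (α := ℝ) b]
            have : dist y 0 ≤ dist y x + dist x 0 := dist_triangle _ _ _
            have hyx : dist y x < ρ b x := mem_ball.1 hy
            have hx0 : dist x 0 ≤ k := mem_closedBall.1 hx'.2
            rw [mem_closedBall]
            linarith
    refine le_trans (Filter.liminf_le_liminf (Filter.Eventually.of_forall hbound)) ?_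
    simp [Filter.liminf_const]

private lemma volume_ball_eq (n : ℕ) (hn : 0 < n) (x : EuclideanSpace ℝ (Fin n)) {r : ℝ}
    (hr : 0 ≤ r) :
    volume (ball x r) = ENNReal.ofReal (r ^ (n : ℕ)) * volume (ball (0 : EuclideanSpace ℝ (Fin n)) 1) := by
  haveI : NeZero n := ⟨hn.ne'⟩
  rw [Measure.addHaar_ball _ _ hr, finrank_euclideanSpace_fin]

/-- If `μ(B(x,r)) ≤ K r^s` for all `r > 0`, then the fractional maximal function is finite. -/
private lemma fracMax_lt_top_of_growth (n : ℕ) (α : ℝ) (hα : 0 ≤ α) (hαn : α < n)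
    (μ : Measure (EuclideanSpace ℝ (Fin n))) (x : EuclideanSpace ℝ (Fin n)) (K : ℝ≥0∞)
    (hK : K ≠ ∞) (h : ∀ r : ℝ, 0 < r → μ (ball x r) ≤ K * ENNReal.ofReal (r ^ ((n : ℝ) - α))) :
    fracMax n α μ x < ⊤ := by
  have hn : 0 < n := by exact_mod_cast hα.trans_lt hαn
  set c₁ : ℝ≥0∞ := volume (ball (0 : EuclideanSpace ℝ (Fin n)) 1) with hc₁
  have hc₁0 : c₁ ≠ 0 := (measure_ball_pos _ _ one_pos).ne'
  have hc₁t : c₁ ≠ ∞ := measure_ball_lt_top.ne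
  have hbound : fracMax n α μ x ≤ K / c₁ := by
    refine iSup₂_le fun r hr => ?_
    have hvol : volume (ball x r) =
        ENNReal.ofReal (r ^ α) * ENNReal.ofReal (r ^ ((n : ℝ) - α)) * c₁ := by
      rw [volume_ball_eq n hn x hr.le, ← hc₁, ← ENNReal.ofReal_mul (by positivity),
        ← Real.rpow_add hr, ← Real.rpow_natCast r n]
      ring_nf
    have hA0 : ENNReal.ofReal (r ^ α) ≠ 0 := by
      simp only [ne_eq, ENNReal.ofReal_eq_zero, not_le]
      positivity
    have hAt : ENNReal.ofReal (r ^ α) ≠ ∞ := ENNReal.ofReal_ne_top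
    have hB0 : ENNReal.ofReal (r ^ ((n : ℝ) - α)) ≠ 0 := by
      simp only [ne_eq, ENNReal.ofReal_eq_zero, not_le]
      positivity
    have hBt : ENNReal.ofReal (r ^ ((n : ℝ) - α)) ≠ ∞ := ENNReal.ofReal_ne_top
    calc ENNReal.ofReal (r ^ α) * μ (ball x r) / volume (ball x r)
        ≤ ENNReal.ofReal (r ^ α) * (K * ENNReal.ofReal (r ^ ((n : ℝ) - α))) /
            (ENNReal.ofReal (r ^ α) * ENNReal.ofReal (r ^ ((n : ℝ) - α)) * c₁) := by
          rw [hvol]; gcongr; exact h r hr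
      _ = K / c₁ := by
          rw [show ENNReal.ofReal (r ^ α) * (K * ENNReal.ofReal (r ^ ((n : ℝ) - α))) =
              (ENNReal.ofReal (r ^ α) * ENNReal.ofReal (r ^ ((n : ℝ) - α))) * K by ring,
            show ENNReal.ofReal (r ^ α) * ENNReal.ofReal (r ^ ((n : ℝ) - α)) * c₁ =
              (ENNReal.ofReal (r ^ α) * ENNReal.ofReal (r ^ ((n : ℝ) - α))) * c₁ by ring]
          exact ENNReal.mul_div_mul_left K c₁ (by simp [hA0, hB0]) (ENNReal.mul_ne_top hAt hBt)
  exact hbound.trans_lt (ENNReal.div_lt_top hK hc₁0)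

/-- The fractional maximal function `M_α μ` of a locally finite Borel measure is finite at
one point if and only if it is finite `ℋ^{n-α}`-almost everywhere. -/
theorem fracMax_finite_iff (n : ℕ) (α : ℝ) (hα : 0 ≤ α) (hαn : α < n)
    (μ : Measure (EuclideanSpace ℝ (Fin n))) [IsLocallyFiniteMeasure μ] :
    (∃ x₀ : EuclideanSpace ℝ (Fin n), fracMax n α μ x₀ < ⊤) ↔
      μH[(n : ℝ) - α] {x : EuclideanSpace ℝ (Fin n) | fracMax n α μ x = ⊤} = 0 := by
  set X := EuclideanSpace ℝ (Fin n)
  have hn : 0 < n := by exact_mod_cast hα.trans_lt hαn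
  set s : ℝ := (n : ℝ) - α with hsdef
  have hs : 0 < s := by simp only [hsdef]; linarith
  constructor
  · rintro ⟨x₀, hx₀⟩
    -- growth bound at x₀
    haveI : NeZero n := ⟨hn.ne'⟩
    set c₁ : ℝ≥0∞ := volume (ball (0 : X) 1) with hc₁
    have hc₁0 : c₁ ≠ 0 := (measure_ball_pos _ _ one_pos).ne'
    have hc₁t : c₁ ≠ ∞ := measure_ball_lt_top.ne
    set D : ℝ≥0∞ := fracMax n α μ x₀ with hD
    have hDt : D ≠ ∞ := hx₀.ne
    set C : ℝ≥0∞ := D * c₁ with hCdef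
    have hCt : C ≠ ∞ := ENNReal.mul_ne_top hDt hc₁t
    have hgrowth : ∀ r : ℝ, 0 < r → μ (ball x₀ r) ≤ C * ENNReal.ofReal (r ^ s) := by
      intro r hr
      have hterm : ENNReal.ofReal (r ^ α) * μ (ball x₀ r) / volume (ball x₀ r) ≤ D :=
        le_iSup₂ (f := fun (r : ℝ) (_ : 0 < r) =>
          ENNReal.ofReal (r ^ α) * μ (ball x₀ r) / volume (ball x₀ r)) r hr
      have hvol : volume (ball x₀ r) =
          ENNReal.ofReal (r ^ α) * ENNReal.ofReal (r ^ s) * c₁ := by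
        rw [volume_ball_eq n hn x₀ hr.le, ← hc₁, ← ENNReal.ofReal_mul (by positivity),
          ← Real.rpow_add hr, hsdef, ← Real.rpow_natCast r n]
        ring_nf
      have hA0 : ENNReal.ofReal (r ^ α) ≠ 0 := by
        simp only [ne_eq, ENNReal.ofReal_eq_zero, not_le]; positivity
      have hAt : ENNReal.ofReal (r ^ α) ≠ ∞ := ENNReal.ofReal_ne_top
      have hv0 : volume (ball x₀ r) ≠ 0 := (measure_ball_pos _ _ hr).ne'
      have hvt : volume (ball x₀ r) ≠ ∞ := measure_ball_lt_top.ne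
      have h1 : ENNReal.ofReal (r ^ α) * μ (ball x₀ r) ≤ D * volume (ball x₀ r) :=
        (ENNReal.div_le_iff_le_mul (Or.inl hv0) (Or.inl hvt)).1 hterm
      have h2 : μ (ball x₀ r) ≤ D * volume (ball x₀ r) / ENNReal.ofReal (r ^ α) := by
        rw [ENNReal.le_div_iff_mul_le (Or.inl hA0) (Or.inl hAt), mul_comm]
        exact h1
      refine h2.trans ?_
      rw [hvol, show D * (ENNReal.ofReal (r ^ α) * ENNReal.ofReal (r ^ s) * c₁) =
        (D * c₁ * ENNReal.ofReal (r ^ s)) * ENNReal.ofReal (r ^ α) by ring,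
        mul_div_assoc, ENNReal.div_self hA0 hAt, mul_one]
    -- inclusion into the key null set
    have hincl : {x : X | fracMax n α μ x = ⊤} ⊆
        {x : X | ∀ M : ℕ, ∀ δ : ℝ, 0 < δ →
          ∃ r : ℝ, 0 < r ∧ r < δ ∧ ((M : ℝ≥0∞) + 1) * ENNReal.ofReal (r ^ s) ≤ μ (ball x r)} := by
      intro x hx
      intro M δ hδ
      by_contra hcon
      push_neg at hcon
      set d : ℝ := dist x x₀ with hd
      have hd0 : 0 ≤ d := dist_nonneg
      set K : ℝ≥0∞ := ((M : ℝ≥0∞) + 1) + C * ENNReal.ofReal ((1 + d / δ) ^ s) with hK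
      have hKt : K ≠ ∞ := by
        refine ENNReal.add_ne_top.2 ⟨by simp, ENNReal.mul_ne_top hCt ENNReal.ofReal_ne_top⟩
      have hball : ∀ r : ℝ, 0 < r → μ (ball x r) ≤ K * ENNReal.ofReal (r ^ s) := by
        intro r hr
        rcases lt_or_ge r δ with h | h
        · have := hcon r hr h
          calc μ (ball x r) ≤ ((M : ℝ≥0∞) + 1) * ENNReal.ofReal (r ^ s) := this.le
            _ ≤ K * ENNReal.ofReal (r ^ s) := by gcongr; exact le_self_add
        · have hsub : ball x r ⊆ ball x₀ (r + d) := by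
            intro y hy
            rw [mem_ball] at hy ⊢
            calc dist y x₀ ≤ dist y x + dist x x₀ := dist_triangle _ _ _
              _ < r + d := by rw [← hd]; linarith
          have h1 : μ (ball x r) ≤ C * ENNReal.ofReal ((r + d) ^ s) :=
            (measure_mono hsub).trans (hgrowth (r + d) (by linarith))
          have h2 : (r + d) ^ s ≤ (1 + d / δ) ^ s * r ^ s := by
            rw [← Real.mul_rpow (by positivity) hr.le]
            refine Real.rpow_le_rpow (by linarith) ?_ hs.le
            have : d ≤ d / δ * r := by
              rw [div_mul_eq_mul_div, le_div_iff₀ hδ]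
              nlinarith
            nlinarith [div_nonneg hd0 hδ.le, hr.le]
          calc μ (ball x r) ≤ C * ENNReal.ofReal ((r + d) ^ s) := h1
            _ ≤ C * (ENNReal.ofReal ((1 + d / δ) ^ s) * ENNReal.ofReal (r ^ s)) := by
                gcongr
                rw [← ENNReal.ofReal_mul (by positivity)]
                exact ENNReal.ofReal_le_ofReal h2
            _ = C * ENNReal.ofReal ((1 + d / δ) ^ s) * ENNReal.ofReal (r ^ s) := by ring
            _ ≤ K * ENNReal.ofReal (r ^ s) := by gcongr; exact le_add_self
      exact absurd (fracMax_lt_top_of_growth n α hα hαn μ x K hKt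
        (by simpa only [← hsdef] using hball))
        (by simp only [not_lt, top_le_iff]; exact hx)
    exact measure_mono_null hincl (key_null n s hs μ)
  · intro h
    have hne : {x : X | fracMax n α μ x = ⊤} ≠ univ := by
      intro heq
      rw [heq] at h
      have hmono : μH[(n : ℝ)] (univ : Set (EuclideanSpace ℝ (Fin n))) ≤
          μH[s] (univ : Set (EuclideanSpace ℝ (Fin n))) :=
        Measure.hausdorffMeasure_mono (by simp only [hsdef]; linarith) _
      have hlip : LipschitzWith 1 (WithLp.equiv 2 (Fin n → ℝ)) := PiLp.lipschitzWith_ofLp 2 _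
      have himg := LipschitzWith.hausdorffMeasure_image_le hlip
        (show (0:ℝ) ≤ (n:ℝ) from Nat.cast_nonneg n)
        (univ : Set (EuclideanSpace ℝ (Fin n)))
      rw [image_univ, (WithLp.equiv 2 (Fin n → ℝ)).surjective.range_eq] at himg
      have hpi : μH[(n : ℝ)] (univ : Set (Fin n → ℝ)) = volume (univ : Set (Fin n → ℝ)) := by
        have h2 := hausdorffMeasure_pi_real (ι := Fin n)
        rw [Fintype.card_fin] at h2
        rw [h2]
      have hpos : 0 < volume (univ : Set (Fin n → ℝ)) :=
        isOpen_univ.measure_pos volume univ_nonempty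
      have hzero : μH[(n : ℝ)] (univ : Set (EuclideanSpace ℝ (Fin n))) = 0 :=
        le_antisymm (hmono.trans h.le) (zero_le)
      rw [hpi, hzero, mul_zero] at himg
      exact absurd (le_antisymm himg (zero_le)) hpos.ne'
    obtain ⟨x₀, hx₀⟩ := (ne_univ_iff_exists_notMem _).1 hne
    exact ⟨x₀, lt_top_iff_ne_top.2 hx₀⟩
end

section
/- Let μ be a locally finite Borel measure on ℝⁿ with n ≥ 2, let 1 < q ≤ n/(n-1), and set α = n − q(n−1). If g ≥ 0 satisfies ‖g‖_{L^{q',∞}(μ)} = 1 (where 1/q + 1/q' = 1), and ν is the measure dν = g dμ, then for every x ∈ ℝⁿ, M₁ν(x) ≤ c_n · (M_α μ(x))^{1/q}, where c_n depends only on n. -/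
open MeasureTheory Metric Filter
open scoped ENNReal

private lemma real_id (q α : ℝ) (n : ℕ) (hq : 0 < q) (hα : α = n - q * ((n:ℝ)-1))
    {r m κr : ℝ} (hr : 0 < r) (hm : 0 < m) (hκ : 0 < κr) :
    r * m ^ (1/q) / (r ^ n * κr) = κr ^ (1/q - 1) * ((r ^ α * m / (r ^ n * κr)) ^ (1/q)) := by
  have h1 : (0:ℝ) < r * m ^ (1/q) / (r ^ n * κr) := by positivity
  have h2 : (0:ℝ) < κr ^ (1/q - 1) * ((r ^ α * m / (r ^ n * κr)) ^ (1/q)) := by positivity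
  have hX : (0:ℝ) < r ^ α * m / (r ^ n * κr) := by positivity
  apply Real.log_injOn_pos (Set.mem_Ioi.2 h1) (Set.mem_Ioi.2 h2)
  rw [Real.log_div (by positivity) (by positivity),
    Real.log_mul (by positivity) (by positivity),
    Real.log_mul (by positivity) (by positivity),
    Real.log_mul (by positivity) (by positivity),
    Real.log_rpow hm, Real.log_rpow hκ, Real.log_rpow hX,
    Real.log_div (by positivity) (by positivity),
    Real.log_mul (by positivity) (by positivity),
    Real.log_mul (by positivity) (by positivity),
    Real.log_rpow hr, Real.log_pow, hα]
  field_simp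
  ring

private lemma real_id2 (q' T : ℝ) (hT : 0 < T) (k : ℕ) :
    2 ^ (k+1) * T * (2 ^ k * T) ^ (-q') = 2 * T ^ (1-q') * ((2:ℝ) ^ (1-q')) ^ k := by
  have h1 : (0:ℝ) < 2 ^ (k+1) * T * (2 ^ k * T) ^ (-q') := by positivity
  have h2 : (0:ℝ) < 2 * T ^ (1-q') * ((2:ℝ) ^ (1-q')) ^ k := by positivity
  have h2T : (0:ℝ) < 2 ^ k * T := by positivity
  apply Real.log_injOn_pos (Set.mem_Ioi.2 h1) (Set.mem_Ioi.2 h2)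
  rw [Real.log_mul (by positivity) (by positivity),
    Real.log_mul (by positivity) (by positivity),
    Real.log_mul (by positivity) (by positivity),
    Real.log_mul (by positivity) (by positivity),
    Real.log_rpow h2T, Real.log_mul (by positivity) (by positivity),
    Real.log_rpow hT,
    Real.log_pow, Real.log_pow, Real.log_pow, Real.log_rpow (by norm_num : (0:ℝ) < 2)]
  push_cast
  ring

/-- The basic splitting estimate for `∫⁻ g` over a set against the weak bound. -/
private lemma key_estimate {X : Type*} [MeasurableSpace X] (μ : Measure X)
    (g : X → ℝ≥0∞) (hg : Measurable g) (q' : ℝ) (hq1 : 1 < q')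
    (hweak : ∀ t : ℝ, 0 < t → μ {x | ENNReal.ofReal t < g x} ≤ ENNReal.ofReal (t ^ (-q')))
    (hinf : μ {x | g x = ⊤} = 0)
    (B : Set X) (T : ℝ) (hT : 0 < T) :
    ∫⁻ y in B, g y ∂μ ≤ ENNReal.ofReal T * μ B +
      (ENNReal.ofReal 2 * (1 - ENNReal.ofReal ((2:ℝ) ^ (1 - q')))⁻¹) *
        ENNReal.ofReal (T ^ (1 - q')) := by
  set A : ℕ → Set X := fun k =>
    {x | ENNReal.ofReal (2 ^ k * T) < g x ∧ g x ≤ ENNReal.ofReal (2 ^ (k+1) * T)} with hA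
  have hcover : B ⊆ (B ∩ {x | g x ≤ ENNReal.ofReal T}) ∪ ({x | g x = ⊤} ∪ ⋃ k, A k) := by
    intro y hy
    by_cases h1 : g y ≤ ENNReal.ofReal T
    · exact Or.inl ⟨hy, h1⟩
    by_cases h2 : g y = ⊤
    · exact Or.inr (Or.inl h2)
    have hex : ∃ k : ℕ, g y ≤ ENNReal.ofReal (2 ^ (k+1) * T) := by
      obtain ⟨k, hk⟩ := pow_unbounded_of_one_lt ((g y).toReal / T) (one_lt_two (α := ℝ))
      refine ⟨k, ?_⟩
      rw [← ENNReal.ofReal_toReal h2]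
      apply ENNReal.ofReal_le_ofReal
      have h3 : (g y).toReal < 2 ^ k * T := (div_lt_iff₀ hT).1 hk
      have h4 : (2:ℝ) ^ k * T ≤ 2 ^ (k + 1) * T := by
        rw [pow_succ]
        nlinarith [pow_pos (show (0:ℝ) < 2 by norm_num) k]
      linarith
    refine Or.inr (Or.inr (Set.mem_iUnion.2 ⟨Nat.find hex, ?_, Nat.find_spec hex⟩))
    rcases Nat.eq_zero_or_pos (Nat.find hex) with h0 | hpos
    · rw [h0]
      simpa using not_le.1 h1
    · have hmin := Nat.find_min hex (Nat.sub_lt hpos one_pos)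
      rw [show Nat.find hex - 1 + 1 = Nat.find hex by omega] at hmin
      exact not_le.1 hmin
  calc ∫⁻ y in B, g y ∂μ
      ≤ ∫⁻ y in (B ∩ {x | g x ≤ ENNReal.ofReal T}) ∪ ({x | g x = ⊤} ∪ ⋃ k, A k), g y ∂μ :=
        lintegral_mono_set hcover
    _ ≤ (∫⁻ y in B ∩ {x | g x ≤ ENNReal.ofReal T}, g y ∂μ) +
        ((∫⁻ y in {x | g x = ⊤}, g y ∂μ) + ∫⁻ y in ⋃ k, A k, g y ∂μ) := by
        refine (lintegral_union_le _ _ _).trans ?_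
        exact add_le_add_right (lintegral_union_le _ _ _) _
    _ ≤ ENNReal.ofReal T * μ B +
        (0 + ∑' k, ∫⁻ y in A k, g y ∂μ) := by
        gcongr
        · calc (∫⁻ y in B ∩ {x | g x ≤ ENNReal.ofReal T}, g y ∂μ)
              ≤ ∫⁻ _ in B ∩ {x | g x ≤ ENNReal.ofReal T}, ENNReal.ofReal T ∂μ :=
                setLIntegral_mono measurable_const fun x hx => hx.2
            _ = ENNReal.ofReal T * μ (B ∩ {x | g x ≤ ENNReal.ofReal T}) :=
                setLIntegral_const _ _
            _ ≤ ENNReal.ofReal T * μ B :=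
                mul_le_mul_right (measure_mono Set.inter_subset_left) _
        · exact le_of_eq (setLIntegral_measure_zero _ _ hinf)
        · exact lintegral_iUnion_le _ _
    _ ≤ ENNReal.ofReal T * μ B +
        (0 + ∑' k : ℕ, ENNReal.ofReal (2 * T ^ (1-q') * ((2:ℝ) ^ (1-q')) ^ k)) := by
        gcongr with k
        calc (∫⁻ y in A k, g y ∂μ)
            ≤ ∫⁻ _ in A k, ENNReal.ofReal (2 ^ (k+1) * T) ∂μ :=
              setLIntegral_mono measurable_const fun x hx => hx.2
          _ = ENNReal.ofReal (2 ^ (k+1) * T) * μ (A k) := setLIntegral_const _ _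
          _ ≤ ENNReal.ofReal (2 ^ (k+1) * T) * ENNReal.ofReal ((2 ^ k * T) ^ (-q')) := by
              refine mul_le_mul_right ?_ _
              refine le_trans (measure_mono fun x hx => hx.1) (hweak _ (by positivity))
          _ = ENNReal.ofReal (2 ^ (k+1) * T * (2 ^ k * T) ^ (-q')) :=
              (ENNReal.ofReal_mul (by positivity)).symm
          _ = ENNReal.ofReal (2 * T ^ (1-q') * ((2:ℝ) ^ (1-q')) ^ k) := by
              rw [real_id2 q' T hT k]
    _ ≤ ENNReal.ofReal T * μ B +
        (ENNReal.ofReal 2 * (1 - ENNReal.ofReal ((2:ℝ) ^ (1 - q')))⁻¹) *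
          ENNReal.ofReal (T ^ (1 - q')) := by
        rw [zero_add]
        gcongr
        have hsum : ∑' k : ℕ, ENNReal.ofReal (2 * T ^ (1-q') * ((2:ℝ) ^ (1-q')) ^ k)
            = (ENNReal.ofReal 2 * ENNReal.ofReal (T ^ (1-q'))) *
              ∑' k : ℕ, (ENNReal.ofReal ((2:ℝ) ^ (1-q'))) ^ k := by
          rw [← ENNReal.tsum_mul_left]
          congr 1 with k
          rw [← ENNReal.ofReal_pow (by positivity), ← ENNReal.ofReal_mul (by positivity),
            ← ENNReal.ofReal_mul (by positivity)]
        rw [hsum, ENNReal.tsum_geometric]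
        ring_nf
        exact le_refl _

/-- If `‖g‖_{L^{q',∞}(μ)} = 1` and `dν = g dμ`, then pointwise
`M₁ν ≤ c_n (M_α μ)^{1/q}` where `α = n - q(n-1)`. -/
theorem fracMax_one_withDensity_le (n : ℕ) (hn : 2 ≤ n) (q : ℝ) (hq : 1 < q)
    (hq' : q ≤ (n : ℝ) / ((n : ℝ) - 1)) :
    ∃ c : ℝ≥0∞, 0 < c ∧ c ≠ ⊤ ∧
      ∀ (μ : Measure (EuclideanSpace ℝ (Fin n))) [IsLocallyFiniteMeasure μ]
        (g : EuclideanSpace ℝ (Fin n) → ℝ≥0∞), Measurable g →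
        (⨆ (t : ℝ) (_ : 0 < t),
            ENNReal.ofReal t *
              (μ {x | ENNReal.ofReal t < g x}) ^ (1 / (q / (q - 1))) ) = 1 →
        ∀ x : EuclideanSpace ℝ (Fin n),
          fracMax n 1 (μ.withDensity g) x ≤
            c * (fracMax n ((n : ℝ) - q * ((n : ℝ) - 1)) μ x) ^ (1 / q) := by
  have hne : Nonempty (Fin n) := ⟨⟨0, by omega⟩⟩
  have hq0 : (0:ℝ) < q - 1 := by linarith
  set Q : ℝ := q / (q - 1) with hQ
  have hQ1 : 1 < Q := by
    rw [hQ, lt_div_iff₀ hq0]; linarith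
  have hQ0 : 0 < Q := lt_trans one_pos hQ1
  have hQinv : 1 / Q = (q - 1) / q := by
    rw [hQ]; field_simp
  -- the geometric ratio
  have hslt : (2:ℝ) ^ (1 - Q) < 1 :=
    Real.rpow_lt_one_of_one_lt_of_neg one_lt_two (by linarith)
  set D : ℝ≥0∞ := ENNReal.ofReal 2 * (1 - ENNReal.ofReal ((2:ℝ) ^ (1 - Q)))⁻¹ with hD
  have hDtop : D ≠ ⊤ := by
    apply ENNReal.mul_ne_top ENNReal.ofReal_ne_top
    rw [Ne, ENNReal.inv_eq_top, tsub_eq_zero_iff_le]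
    exact not_le.2 (ENNReal.ofReal_lt_one.2 hslt)
  -- the normalized volume
  set κ : ℝ≥0∞ := volume (ball (0 : EuclideanSpace ℝ (Fin n)) 1) with hκ
  have hκpos : 0 < κ := measure_ball_pos volume 0 one_pos
  have hκtop : κ ≠ ⊤ := measure_ball_lt_top.ne
  set κr : ℝ := κ.toReal with hκr
  have hκrpos : 0 < κr := ENNReal.toReal_pos hκpos.ne' hκtop
  refine ⟨(1 + D) * ENNReal.ofReal (κr ^ (1/q - 1)), ?_, ?_, ?_⟩
  · refine ENNReal.mul_pos ?_ ?_
    · exact (lt_of_lt_of_le zero_lt_one le_self_add).ne'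
    · exact (ENNReal.ofReal_pos.2 (by positivity)).ne'
  · exact ENNReal.mul_ne_top (ENNReal.add_ne_top.2 ⟨ENNReal.one_ne_top, hDtop⟩)
      ENNReal.ofReal_ne_top
  intro μ _ g hg hnorm x
  -- weak-type bound on superlevel sets
  have hweak : ∀ t : ℝ, 0 < t →
      μ {x | ENNReal.ofReal t < g x} ≤ ENNReal.ofReal (t ^ (-Q)) := by
    intro t ht
    have h1 : ENNReal.ofReal t * (μ {x | ENNReal.ofReal t < g x}) ^ (1 / Q) ≤ 1 := by
      refine le_trans ?_ hnorm.le
      exact le_iSup₂ (f := fun t (_ : 0 < t) =>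
        ENNReal.ofReal t * (μ {x | ENNReal.ofReal t < g x}) ^ (1 / (q / (q - 1)))) t ht
    set b : ℝ≥0∞ := μ {x | ENNReal.ofReal t < g x} with hb
    have ha0 : ENNReal.ofReal t ≠ 0 := (ENNReal.ofReal_pos.2 ht).ne'
    have hb1 : b ^ (1 / Q) ≤ (ENNReal.ofReal t)⁻¹ := by
      calc b ^ (1 / Q) = (ENNReal.ofReal t)⁻¹ * ENNReal.ofReal t * b ^ (1 / Q) := by
            rw [ENNReal.inv_mul_cancel ha0 ENNReal.ofReal_ne_top, one_mul]
        _ = (ENNReal.ofReal t)⁻¹ * (ENNReal.ofReal t * b ^ (1 / Q)) := by ring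
        _ ≤ (ENNReal.ofReal t)⁻¹ * 1 := mul_le_mul_right h1 _
        _ = (ENNReal.ofReal t)⁻¹ := mul_one _
    have hb2 := ENNReal.rpow_le_rpow (z := ((1:ℝ)/Q)⁻¹) hb1
      (le_of_lt (inv_pos.2 (one_div_pos.2 hQ0)))
    rw [ENNReal.rpow_rpow_inv (one_div_pos.2 hQ0).ne'] at hb2
    calc b ≤ ((ENNReal.ofReal t)⁻¹) ^ ((1:ℝ)/Q)⁻¹ := hb2
      _ = (ENNReal.ofReal t⁻¹) ^ Q := by
          rw [ENNReal.ofReal_inv_of_pos ht, one_div, inv_inv]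
      _ = ENNReal.ofReal ((t⁻¹) ^ Q) := ENNReal.ofReal_rpow_of_pos (inv_pos.2 ht)
      _ = ENNReal.ofReal (t ^ (-Q)) := by
          rw [Real.rpow_neg ht.le, Real.inv_rpow ht.le]
  -- g is a.e. finite
  have hinf : μ {x | g x = ⊤} = 0 := by
    have htend : Tendsto (fun j : ℕ => ENNReal.ofReal (((j:ℝ)+1) ^ (-Q))) atTop (nhds 0) := by
      have h1 : Tendsto (fun x : ℝ => x ^ (-Q)) atTop (nhds 0) := tendsto_rpow_neg_atTop hQ0
      have h2 : Tendsto (fun j : ℕ => (j:ℝ)+1) atTop atTop :=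
        tendsto_atTop_add_const_right _ _ tendsto_natCast_atTop_atTop
      have := ENNReal.tendsto_ofReal (h1.comp h2)
      simpa using this
    refine le_antisymm (ge_of_tendsto' htend fun j => ?_) zero_le
    refine le_trans (measure_mono fun y hy => ?_) (hweak _ (by positivity))
    simp only [Set.mem_setOf_eq] at hy ⊢
    rw [hy]
    exact ENNReal.ofReal_lt_top
  -- main pointwise estimate
  rw [fracMax]
  refine iSup₂_le fun r hr => ?_
  have hμB_top : μ (ball x r) ≠ ⊤ := measure_ball_lt_top.ne
  have hvol : volume (ball x r) = ENNReal.ofReal (r ^ n * κr) := by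
    have h := Measure.addHaar_ball (μ := (volume : Measure (EuclideanSpace ℝ (Fin n)))) x hr.le
    rw [h, finrank_euclideanSpace_fin, ← hκ, ← ENNReal.ofReal_toReal hκtop, ← hκr,
      ← ENNReal.ofReal_mul (by positivity)]
  rw [Real.rpow_one]
  rw [withDensity_apply g measurableSet_ball]
  by_cases hμB0 : μ (ball x r) = 0
  · rw [setLIntegral_measure_zero _ _ hμB0, mul_zero, ENNReal.zero_div]
    exact zero_le
  -- positive measure case
  set m : ℝ := (μ (ball x r)).toReal with hm
  have hmpos : 0 < m := ENNReal.toReal_pos hμB0 hμB_top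
  have hμBm : μ (ball x r) = ENNReal.ofReal m := (ENNReal.ofReal_toReal hμB_top).symm
  -- apply the key estimate with T = m ^ (-(1/Q))
  have hT : (0:ℝ) < m ^ (-(1/Q)) := by positivity
  have hkey := key_estimate μ g hg Q hQ1 hweak hinf (ball x r) (m ^ (-(1/Q))) hT
  have he1 : ENNReal.ofReal (m ^ (-(1/Q))) * μ (ball x r) = ENNReal.ofReal (m ^ (1/q)) := by
    rw [hμBm, ← ENNReal.ofReal_mul (by positivity)]
    congr 1
    rw [← Real.rpow_add_one hmpos.ne' (-(1/Q))]
    congr 1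
    rw [hQinv]
    field_simp
    ring
  have he2 : ENNReal.ofReal ((m ^ (-(1/Q))) ^ (1 - Q)) = ENNReal.ofReal (m ^ (1/q)) := by
    congr 1
    rw [← Real.rpow_mul hmpos.le]
    congr 1
    rw [hQ]
    field_simp
    ring
  have hνB : ∫⁻ y in ball x r, g y ∂μ ≤ (1 + D) * ENNReal.ofReal (m ^ (1/q)) := by
    refine hkey.trans ?_
    rw [he1, ← hD, he2, add_mul, one_mul]
  have hX : (0:ℝ) < r ^ ((n:ℝ) - q * ((n:ℝ) - 1)) * m / (r ^ n * κr) := by positivity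
  calc ENNReal.ofReal r * (∫⁻ y in ball x r, g y ∂μ) / volume (ball x r)
      ≤ ENNReal.ofReal r * ((1 + D) * ENNReal.ofReal (m ^ (1/q))) / volume (ball x r) := by
        gcongr
    _ = (1 + D) * ENNReal.ofReal (r * m ^ (1/q) / (r ^ n * κr)) := by
        rw [hvol, ENNReal.ofReal_div_of_pos (by positivity), ENNReal.ofReal_mul hr.le]
        simp only [div_eq_mul_inv]
        ring
    _ = (1 + D) * ENNReal.ofReal (κr ^ (1/q - 1) *
          ((r ^ ((n:ℝ) - q * ((n:ℝ) - 1)) * m / (r ^ n * κr)) ^ (1/q))) := by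
        rw [real_id q ((n:ℝ) - q * ((n:ℝ) - 1)) n (by linarith) rfl hr hmpos hκrpos]
    _ = ((1 + D) * ENNReal.ofReal (κr ^ (1/q - 1))) *
          (ENNReal.ofReal (r ^ ((n:ℝ) - q * ((n:ℝ) - 1)) * m / (r ^ n * κr))) ^ (1/q) := by
        rw [ENNReal.ofReal_mul (by positivity), ← ENNReal.ofReal_rpow_of_pos hX]
        rw [mul_assoc]
    _ ≤ ((1 + D) * ENNReal.ofReal (κr ^ (1/q - 1))) *
          (fracMax n ((n:ℝ) - q * ((n:ℝ) - 1)) μ x) ^ (1/q) := by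
        refine mul_le_mul_right (ENNReal.rpow_le_rpow ?_ (by positivity)) _
        have heq : ENNReal.ofReal (r ^ ((n:ℝ) - q * ((n:ℝ) - 1)) * m / (r ^ n * κr))
            = ENNReal.ofReal (r ^ ((n:ℝ) - q * ((n:ℝ) - 1))) * μ (ball x r) /
              volume (ball x r) := by
          rw [hvol, hμBm, ENNReal.ofReal_div_of_pos (by positivity),
            ENNReal.ofReal_mul (by positivity)]
        rw [heq, fracMax]
        exact le_iSup₂ (f := fun r (_ : 0 < r) =>
          ENNReal.ofReal (r ^ ((n:ℝ) - q * ((n:ℝ) - 1))) * μ (ball x r) /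
            volume (ball x r)) r hr
end

section
/- Let 1 ≤ p, q < ∞ and let (w, v) be a pair of weights on ℝⁿ such that the weak-type Sobolev inequality ‖u‖_{L^{q,∞}(w)} ≤ C₀ ‖∇u‖_{L^p(v)} holds for all compactly supported Lipschitz u. Then there is a constant C = C(C₀, p, q) such that the Lorentz-space inequality ‖u‖_{L^{q,p}(w)} ≤ C ‖∇u‖_{L^p(v)} holds for all compactly supported Lipschitz u. -/
open MeasureTheory
open scoped ENNReal

lemma trunc_fderiv {E : Type*} [NormedAddCommGroup E] [NormedSpace ℝ E]
    (u : E → ℝ) (c : ℝ) (hc : 0 < c) (hu : Continuous u) (x : E) :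
    fderiv ℝ (fun y => min (max (|u y| - c) 0) c) x = 0 ∨
    (c < |u x| ∧ |u x| < 2 * c ∧
      ‖fderiv ℝ (fun y => min (max (|u y| - c) 0) c) x‖ = ‖fderiv ℝ u x‖) := by
  set f : E → ℝ := fun y => min (max (|u y| - c) 0) c with hf
  have hf0 : ∀ y, 0 ≤ f y := fun y => le_min (le_max_right _ _) hc.le
  have hfc : ∀ y, f y ≤ c := fun y => min_le_right _ _
  rcases eq_or_lt_of_le (hf0 x) with h0 | h0
  · left
    by_cases hd : DifferentiableAt ℝ f x
    · exact IsLocalMin.fderiv_eq_zero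
        (Filter.Eventually.of_forall (fun y => h0 ▸ hf0 y))
    · exact fderiv_zero_of_not_differentiableAt hd
  rcases eq_or_lt_of_le (hfc x) with hc0 | hc0
  · left
    exact IsLocalMax.fderiv_eq_zero (Filter.Eventually.of_forall (fun y => hc0 ▸ hfc y))
  · right
    have h1 : c < |u x| := by
      by_contra h
      push_neg at h
      have hz : f x = 0 := by
        simp only [hf]; rw [max_eq_right (by linarith), min_eq_left hc.le]
      linarith
    have h2 : |u x| < 2 * c := by
      by_contra h
      push_neg at h
      have hz : f x = c := by
        simp only [hf]; rw [max_eq_left (by linarith), min_eq_right (by linarith)]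
      linarith
    refine ⟨h1, h2, ?_⟩
    have hune : u x ≠ 0 := fun h => by rw [h] at h1; simp at h1; linarith
    rcases lt_or_gt_of_ne hune with hneg | hpos
    · have hV : IsOpen {y | u y < 0 ∧ c < -u y ∧ -u y < 2 * c} := by
        refine IsOpen.inter (isOpen_lt hu continuous_const) (IsOpen.inter ?_ ?_)
        · exact isOpen_lt continuous_const hu.neg
        · exact isOpen_lt hu.neg continuous_const
      have hxV : x ∈ {y | u y < 0 ∧ c < -u y ∧ -u y < 2 * c} := by
        refine ⟨hneg, ?_, ?_⟩ <;> rw [abs_of_neg hneg] at h1 h2 <;> linarith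
      have heq : f =ᶠ[nhds x] fun y => -u y - c := by
        filter_upwards [hV.mem_nhds hxV] with y hy
        simp only [hf]
        rw [abs_of_neg hy.1, max_eq_left (by linarith [hy.2.1]),
          min_eq_left (by linarith [hy.2.2])]
      rw [heq.fderiv_eq, fderiv_sub_const, fderiv_fun_neg, norm_neg]
    · have hV : IsOpen {y | 0 < u y ∧ c < u y ∧ u y < 2 * c} := by
        refine IsOpen.inter (isOpen_lt continuous_const hu) (IsOpen.inter ?_ ?_)
        · exact isOpen_lt continuous_const hu
        · exact isOpen_lt hu continuous_const
      have hxV : x ∈ {y | 0 < u y ∧ c < u y ∧ u y < 2 * c} := by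
        refine ⟨hpos, ?_, ?_⟩ <;> rw [abs_of_pos hpos] at h1 h2 <;> linarith
      have heq : f =ᶠ[nhds x] fun y => u y - c := by
        filter_upwards [hV.mem_nhds hxV] with y hy
        simp only [hf]
        rw [abs_of_pos hy.1, max_eq_left (by linarith [hy.2.1]),
          min_eq_left (by linarith [hy.2.2])]
      rw [heq.fderiv_eq, fderiv_sub_const]

/-- Maz'ya truncation: a weak-type `(p, q)` two-weight Sobolev inequality self-improves
to the Lorentz-space `L^{q,p}` inequality. -/
theorem weak_implies_lorentz_sobolev (n : ℕ) (p q : ℝ) (hp : 1 ≤ p) (hq : 1 ≤ q)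
    (C₀ : ℝ≥0∞) (hC₀ : C₀ ≠ ⊤) :
    ∃ C : ℝ≥0∞, C ≠ ⊤ ∧
      ∀ (w v : EuclideanSpace ℝ (Fin n) → ℝ),
        (∀ x, 0 ≤ w x) → (∀ x, 0 ≤ v x) →
        LocallyIntegrable w volume → LocallyIntegrable v volume →
        (∀ u : EuclideanSpace ℝ (Fin n) → ℝ,
          (∃ K : NNReal, LipschitzWith K u) → HasCompactSupport u →
            (⨆ (t : ℝ) (_ : 0 < t),
                ENNReal.ofReal t *
                  ((volume.withDensity fun x => ENNReal.ofReal (w x))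
                      {x | t < |u x|}) ^ (1 / q))
              ≤ C₀ * (∫⁻ x, (‖fderiv ℝ u x‖₊ : ℝ≥0∞) ^ p *
                  ENNReal.ofReal (v x)) ^ (1 / p)) →
        ∀ u : EuclideanSpace ℝ (Fin n) → ℝ,
          (∃ K : NNReal, LipschitzWith K u) → HasCompactSupport u →
            (ENNReal.ofReal q *
                ∫⁻ t in Set.Ioi (0 : ℝ),
                  ENNReal.ofReal (t ^ (p - 1)) *
                    ((volume.withDensity fun x => ENNReal.ofReal (w x))
                        {x | t < |u x|}) ^ (p / q)) ^ (1 / p)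
              ≤ C * (∫⁻ x, (‖fderiv ℝ u x‖₊ : ℝ≥0∞) ^ p *
                  ENNReal.ofReal (v x)) ^ (1 / p) := by
  have hp0 : (0:ℝ) < p := by linarith
  have hq0 : (0:ℝ) < q := by linarith
  have h1p : (0:ℝ) ≤ 1 / p := by positivity
  refine ⟨(ENNReal.ofReal q * ENNReal.ofReal (2 ^ (3 * p - 1))) ^ (1 / p) * C₀, ?_, ?_⟩
  · exact ENNReal.mul_ne_top (ENNReal.rpow_ne_top_of_nonneg h1p
      (ENNReal.mul_ne_top ENNReal.ofReal_ne_top ENNReal.ofReal_ne_top)) hC₀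
  intro w v hw hv hwi hvi hweak u hlip hsupp
  obtain ⟨K, hK⟩ := hlip
  set μ : Measure (EuclideanSpace ℝ (Fin n)) :=
    volume.withDensity fun x => ENNReal.ofReal (w x) with hμ
  set g : EuclideanSpace ℝ (Fin n) → ℝ≥0∞ :=
    fun x => (‖fderiv ℝ u x‖₊ : ℝ≥0∞) ^ p * ENNReal.ofReal (v x) with hg
  set uk : ℤ → EuclideanSpace ℝ (Fin n) → ℝ :=
    fun k y => min (max (|u y| - 2 ^ k) 0) (2 ^ k) with huk
  set A : ℤ → Set (EuclideanSpace ℝ (Fin n)) :=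
    fun k => {x | (2:ℝ) ^ k < |u x| ∧ |u x| < 2 ^ (k + 1)} with hA
  set J : ℤ → ℝ≥0∞ := fun k => ∫⁻ x in A k, g x with hJ
  have hcpos : ∀ k : ℤ, (0:ℝ) < 2 ^ k := fun k => zpow_pos two_pos k
  have h2c : ∀ k : ℤ, (2:ℝ) * 2 ^ k = 2 ^ (k + 1) := fun k => by
    rw [zpow_add_one₀ two_ne_zero]; ring
  -- pointwise bound on the gradient of the truncations
  have hptw : ∀ (k : ℤ) x, (‖fderiv ℝ (uk k) x‖₊ : ℝ≥0∞) ^ p * ENNReal.ofReal (v x)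
      ≤ (A k).indicator g x := by
    intro k x
    rcases trunc_fderiv u (2 ^ k) (hcpos k) hK.continuous x with h | ⟨h1, h2, h3⟩
    · rw [show fderiv ℝ (uk k) x = 0 from h]
      simp only [nnnorm_zero, ENNReal.coe_zero]
      rw [ENNReal.zero_rpow_of_pos hp0, zero_mul]
      exact zero_le
    · rw [h2c k] at h2
      have hx : x ∈ A k := ⟨h1, h2⟩
      rw [Set.indicator_of_mem hx]
      have hnn : ‖fderiv ℝ (uk k) x‖₊ = ‖fderiv ℝ u x‖₊ :=
        NNReal.coe_injective (by simpa using h3)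
      rw [show ((‖fderiv ℝ (uk k) x‖₊ : ℝ≥0∞)) = (‖fderiv ℝ u x‖₊ : ℝ≥0∞) by rw [hnn]]
  have hAmeas : ∀ k : ℤ, MeasurableSet (A k) := by
    intro k
    have : IsOpen (A k) :=
      IsOpen.inter (isOpen_lt continuous_const hK.continuous.abs)
        (isOpen_lt hK.continuous.abs continuous_const)
    exact this.measurableSet
  have hlipk : ∀ k : ℤ, LipschitzWith (1 * K) (uk k) := by
    intro k
    have habs : LipschitzWith (1 * K) (fun y => |u y|) := lipschitzWith_one_norm.comp hK
    have hsub : LipschitzWith (1 * K) (fun y => |u y| - 2 ^ k) := fun x y => by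
      simpa [edist_sub_right] using habs x y
    exact (hsub.max_const 0).min_const _
  have hcsk : ∀ k : ℤ, HasCompactSupport (uk k) := by
    intro k
    refine hsupp.mono (fun y hy => ?_)
    simp only [Function.mem_support] at hy ⊢
    intro h0
    apply hy
    simp only [huk, h0, abs_zero, zero_sub]
    rw [max_eq_right (by linarith [hcpos k]), min_eq_left (hcpos k).le]
  have hInt : ∀ k : ℤ,
      (∫⁻ x, (‖fderiv ℝ (uk k) x‖₊ : ℝ≥0∞) ^ p * ENNReal.ofReal (v x)) ≤ J k :=
    fun k => le_trans (lintegral_mono (hptw k))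
      (le_of_eq (lintegral_indicator (hAmeas k) g))
  -- the key estimate from the weak-type inequality applied to the truncations
  have est : ∀ k : ℤ, ENNReal.ofReal ((2:ℝ) ^ (k - 1)) * (μ {x | (2:ℝ) ^ (k + 1) < |u x|}) ^ (1 / q)
      ≤ C₀ * (J k) ^ (1 / p) := by
    intro k
    have hsub2 : {x | (2:ℝ) ^ (k + 1) < |u x|} ⊆ {x | (2:ℝ) ^ (k - 1) < |uk k x|} := by
      intro x hx
      simp only [Set.mem_setOf_eq] at hx ⊢
      have h1 : uk k x = 2 ^ k := by
        simp only [huk]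
        rw [max_eq_left (by linarith [h2c k, hcpos k]), min_eq_right (by linarith [h2c k])]
      rw [h1, abs_of_pos (hcpos k)]
      exact zpow_lt_zpow_right₀ one_lt_two (by omega)
    calc ENNReal.ofReal ((2:ℝ) ^ (k - 1)) * (μ {x | (2:ℝ) ^ (k + 1) < |u x|}) ^ (1 / q)
        ≤ ENNReal.ofReal ((2:ℝ) ^ (k - 1)) * (μ {x | (2:ℝ) ^ (k - 1) < |uk k x|}) ^ (1 / q) :=
          mul_le_mul_right (ENNReal.rpow_le_rpow (measure_mono hsub2) (by positivity)) _
      _ ≤ ⨆ (t : ℝ) (_ : 0 < t), ENNReal.ofReal t * (μ {x | t < |uk k x|}) ^ (1 / q) :=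
          le_iSup₂_of_le ((2:ℝ) ^ (k - 1)) (hcpos _) le_rfl
      _ ≤ C₀ * (∫⁻ x, (‖fderiv ℝ (uk k) x‖₊ : ℝ≥0∞) ^ p * ENNReal.ofReal (v x)) ^ (1 / p) :=
          hweak (uk k) ⟨1 * K, hlipk k⟩ (hcsk k)
      _ ≤ C₀ * (J k) ^ (1 / p) :=
          mul_le_mul_right (ENNReal.rpow_le_rpow (hInt k) h1p) C₀
  have est2 : ∀ k : ℤ, ENNReal.ofReal ((2:ℝ) ^ (k - 1)) ^ p *
      (μ {x | (2:ℝ) ^ (k + 1) < |u x|}) ^ (p / q) ≤ C₀ ^ p * J k := by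
    intro k
    have h := ENNReal.rpow_le_rpow (est k) hp0.le
    rw [ENNReal.mul_rpow_of_nonneg _ _ hp0.le, ← ENNReal.rpow_mul,
      ENNReal.mul_rpow_of_nonneg _ _ hp0.le, ← ENNReal.rpow_mul,
      one_div_mul_cancel (ne_of_gt hp0), ENNReal.rpow_one,
      show 1 / q * p = p / q by ring] at h
    exact h
  -- dyadic decomposition of the Lorentz integral
  have bound2 : ∀ k : ℤ,
      (∫⁻ t in Set.Ioc ((2:ℝ) ^ k) (2 ^ (k + 1)),
        ENNReal.ofReal (t ^ (p - 1)) * (μ {x | t < |u x|}) ^ (p / q))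
      ≤ ENNReal.ofReal (2 ^ (3 * p - 1)) * (C₀ ^ p * J (k - 1)) := by
    intro k
    have e2 := est2 (k - 1)
    rw [show k - 1 + 1 = k by ring, show k - 1 - 1 = k - 2 by ring] at e2
    have hconst : ((2:ℝ) ^ (k + 1)) ^ (p - 1) * 2 ^ k
        = 2 ^ (3 * p - 1) * ((2:ℝ) ^ (k - 2)) ^ p := by
      have hz : ∀ m : ℤ, ((2:ℝ) ^ m) = (2:ℝ) ^ (m : ℝ) := fun m => (Real.rpow_intCast 2 m).symm
      rw [hz (k + 1), hz k, hz (k - 2), ← Real.rpow_mul (by norm_num),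
        ← Real.rpow_mul (by norm_num), ← Real.rpow_add two_pos, ← Real.rpow_add two_pos]
      congr 1
      push_cast
      ring
    calc (∫⁻ t in Set.Ioc ((2:ℝ) ^ k) (2 ^ (k + 1)),
          ENNReal.ofReal (t ^ (p - 1)) * (μ {x | t < |u x|}) ^ (p / q))
        ≤ (ENNReal.ofReal (((2:ℝ) ^ (k + 1)) ^ (p - 1)) *
            (μ {x | (2:ℝ) ^ k < |u x|}) ^ (p / q)) * ENNReal.ofReal ((2:ℝ) ^ k) := by
          have hmono : ∀ t ∈ Set.Ioc ((2:ℝ) ^ k) ((2:ℝ) ^ (k + 1)),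
              ENNReal.ofReal (t ^ (p - 1)) * (μ {x | t < |u x|}) ^ (p / q)
              ≤ ENNReal.ofReal (((2:ℝ) ^ (k + 1)) ^ (p - 1)) *
                  (μ {x | (2:ℝ) ^ k < |u x|}) ^ (p / q) := by
            intro t ht
            obtain ⟨ht1, ht2⟩ := ht
            have hm1 : ENNReal.ofReal (t ^ (p - 1))
                ≤ ENNReal.ofReal (((2:ℝ) ^ (k + 1)) ^ (p - 1)) :=
              ENNReal.ofReal_le_ofReal
                (Real.rpow_le_rpow ((hcpos k).trans ht1).le ht2 (by linarith))
            have hm2 : (μ {x | t < |u x|}) ^ (p / q) ≤ (μ {x | (2:ℝ) ^ k < |u x|}) ^ (p / q) :=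
              ENNReal.rpow_le_rpow (measure_mono (fun x hx => lt_trans ht1 hx)) (by positivity)
            exact mul_le_mul' hm1 hm2
          refine le_trans (setLIntegral_mono measurable_const hmono) ?_
          rw [setLIntegral_const, Real.volume_Ioc,
            show (2:ℝ) ^ (k + 1) - 2 ^ k = 2 ^ k by linarith [h2c k]]
      _ = ENNReal.ofReal (2 ^ (3 * p - 1)) *
            (ENNReal.ofReal ((2:ℝ) ^ (k - 2)) ^ p * (μ {x | (2:ℝ) ^ k < |u x|}) ^ (p / q)) := by
          rw [ENNReal.ofReal_rpow_of_pos (hcpos (k - 2)),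
            mul_comm _ (ENNReal.ofReal ((2:ℝ) ^ k)), ← mul_assoc,
            ← ENNReal.ofReal_mul (hcpos k).le, ← mul_assoc,
            ← ENNReal.ofReal_mul (by positivity)]
          congr 2
          rw [mul_comm ((2:ℝ) ^ k) _]
          exact hconst
      _ ≤ ENNReal.ofReal (2 ^ (3 * p - 1)) * (C₀ ^ p * J (k - 1)) :=
          mul_le_mul_right e2 _
  have hcover : Set.Ioi (0:ℝ) ⊆ ⋃ k : ℤ, Set.Ioc ((2:ℝ) ^ k) (2 ^ (k + 1)) := by
    intro t ht
    obtain ⟨k, hk⟩ := exists_mem_Ioc_zpow (Set.mem_Ioi.mp ht) one_lt_two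
    exact Set.mem_iUnion.2 ⟨k, hk⟩
  have hdisj : Pairwise (Function.onFun Disjoint A) := by
    intro k j hkj
    rcases Ne.lt_or_gt hkj with h | h
    · rw [Function.onFun, Set.disjoint_left]
      rintro x ⟨_, hx2⟩ ⟨hx3, _⟩
      have := zpow_le_zpow_right₀ (one_le_two : (1:ℝ) ≤ 2) (by omega : k + 1 ≤ j)
      linarith
    · rw [Function.onFun, Set.disjoint_left]
      rintro x ⟨hx1, _⟩ ⟨_, hx4⟩
      have := zpow_le_zpow_right₀ (one_le_two : (1:ℝ) ≤ 2) (by omega : j + 1 ≤ k)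
      linarith
  have hsum : (∫⁻ t in Set.Ioi (0:ℝ),
      ENNReal.ofReal (t ^ (p - 1)) * (μ {x | t < |u x|}) ^ (p / q))
      ≤ ENNReal.ofReal (2 ^ (3 * p - 1)) * (C₀ ^ p * ∫⁻ x, g x) := by
    calc (∫⁻ t in Set.Ioi (0:ℝ), ENNReal.ofReal (t ^ (p - 1)) * (μ {x | t < |u x|}) ^ (p / q))
        ≤ ∫⁻ t in ⋃ k : ℤ, Set.Ioc ((2:ℝ) ^ k) (2 ^ (k + 1)),
            ENNReal.ofReal (t ^ (p - 1)) * (μ {x | t < |u x|}) ^ (p / q) :=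
          lintegral_mono_set hcover
      _ ≤ ∑' k : ℤ, ∫⁻ t in Set.Ioc ((2:ℝ) ^ k) (2 ^ (k + 1)),
            ENNReal.ofReal (t ^ (p - 1)) * (μ {x | t < |u x|}) ^ (p / q) :=
          lintegral_iUnion_le _ _
      _ ≤ ∑' k : ℤ, ENNReal.ofReal (2 ^ (3 * p - 1)) * (C₀ ^ p * J (k - 1)) :=
          ENNReal.tsum_le_tsum bound2
      _ = ENNReal.ofReal (2 ^ (3 * p - 1)) * (C₀ ^ p * ∑' k : ℤ, J (k - 1)) := by
          rw [ENNReal.tsum_mul_left, ENNReal.tsum_mul_left]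
      _ = ENNReal.ofReal (2 ^ (3 * p - 1)) * (C₀ ^ p * ∑' k : ℤ, J k) := by
          congr 2
          exact (Equiv.subRight (1:ℤ)).tsum_eq (fun k => J k)
      _ ≤ ENNReal.ofReal (2 ^ (3 * p - 1)) * (C₀ ^ p * ∫⁻ x, g x) := by
          gcongr
          calc (∑' k : ℤ, J k) = ∫⁻ x in ⋃ k : ℤ, A k, g x :=
                (lintegral_iUnion hAmeas hdisj g).symm
            _ ≤ ∫⁻ x, g x := setLIntegral_le_lintegral _ _
  calc (ENNReal.ofReal q * ∫⁻ t in Set.Ioi (0:ℝ),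
        ENNReal.ofReal (t ^ (p - 1)) * (μ {x | t < |u x|}) ^ (p / q)) ^ (1 / p)
      ≤ (ENNReal.ofReal q *
          (ENNReal.ofReal (2 ^ (3 * p - 1)) * (C₀ ^ p * ∫⁻ x, g x))) ^ (1 / p) := by
        gcongr
      _ = (ENNReal.ofReal q * ENNReal.ofReal (2 ^ (3 * p - 1))) ^ (1 / p) * C₀ *
          (∫⁻ x, g x) ^ (1 / p) := by
        rw [ENNReal.mul_rpow_of_nonneg _ _ h1p, ENNReal.mul_rpow_of_nonneg _ _ h1p,
          ENNReal.mul_rpow_of_nonneg _ _ h1p, ENNReal.mul_rpow_of_nonneg _ _ h1p,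
          ← ENNReal.rpow_mul C₀, mul_one_div_cancel (ne_of_gt hp0), ENNReal.rpow_one]
        ring
end
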